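/- arXiv:1109.1064 — 7 statements merged into one kernel-verified Lean document; each statement's English description precedes it below -/
import Mathlib

section
/- For a semigroup X the following conditions are equivalent: (1) υ(X) is a finite semilattice; (2) υ(X) is an inverse semigroup; (3) the idempotents of the semigroup υ(X) commute and υ(X) is sub-Clifford or regular; (4) X is a finite linear semilattice, isomorphic to Lₙ for some integer n ≥ 0. -/
open Set

/-- An *upfamily* on `X`: a nonempty family of nonempty subsets of `X`
that is closed under taking supersets. -/
def IsUpfamily {X : Type*} (F : Set (Set X)) : Prop :=
  F.Nonempty ∧ (∀ A ∈ F, A.Nonempty) ∧ ∀ A ∈ F, ∀ B : Set X, A ⊆ B → B ∈ F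

/-- The space `υ(X)` of upfamilies on `X`. -/
def Upfamily (X : Type*) : Type _ := {F : Set (Set X) // IsUpfamily F}

/-- The extension of the binary operation of `X` to families of subsets of `X`:
`𝓐*𝓑 = ⟨⋃_{a ∈ A} a*B_a : A ∈ 𝓐, {B_a}_{a∈A} ⊆ 𝓑⟩`. -/
def upMul {X : Type*} [Mul X] (F G : Set (Set X)) : Set (Set X) :=
  {C | ∃ A ∈ F, ∃ B : X → Set X, (∀ a ∈ A, B a ∈ G) ∧ (⋃ a ∈ A, (fun y => a * y) '' B a) ⊆ C}

theorem IsUpfamily.upMul {X : Type*} [Mul X] {F G : Set (Set X)}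
    (hF : IsUpfamily F) (hG : IsUpfamily G) : IsUpfamily (upMul F G) := by
  obtain ⟨⟨A0, hA0⟩, hFne, hFup⟩ := hF
  obtain ⟨⟨B0, hB0⟩, hGne, hGup⟩ := hG
  refine ⟨⟨univ, A0, hA0, fun _ => B0, fun a _ => hB0, subset_univ _⟩, ?_, ?_⟩
  · rintro C ⟨A, hA, B, hB, hsub⟩
    obtain ⟨a, ha⟩ := hFne A hA
    obtain ⟨b, hb⟩ := hGne (B a) (hB a ha)
    exact ⟨a * b, hsub (mem_biUnion ha ⟨b, hb, rfl⟩)⟩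
  · rintro C ⟨A, hA, B, hB, hsub⟩ D hCD
    exact ⟨A, hA, B, hB, hsub.trans hCD⟩

/-- `υ(X)` is a semigroup under the extended operation. -/
instance {X : Type*} [Mul X] : Mul (Upfamily X) :=
  ⟨fun F G => ⟨upMul F.1 G.1, F.2.upMul G.2⟩⟩

/-- The embedding `X → υ(X)`, `x ↦ ⟨x⟩ = {A ⊆ X : x ∈ A}`. -/
def Upfamily.principal {X : Type*} (x : X) : Upfamily X :=
  ⟨{A | x ∈ A}, ⟨univ, mem_univ x⟩, fun A hA => ⟨x, hA⟩, fun _ hA _ hAB => hAB hA⟩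

/-- An upfamily is linked if any two of its members intersect. -/
def Upfamily.Linked {X : Type*} (F : Upfamily X) : Prop :=
  ∀ A ∈ F.1, ∀ B ∈ F.1, (A ∩ B).Nonempty

/-- Maximal linked upfamilies. -/
def Upfamily.IsMaxLinked {X : Type*} (F : Upfamily X) : Prop :=
  F.Linked ∧ ∀ G : Upfamily X, G.Linked → F.1 ⊆ G.1 → F = G

/-- Filters: upfamilies closed under binary intersections. -/
def Upfamily.IsFilter {X : Type*} (F : Upfamily X) : Prop :=
  ∀ A ∈ F.1, ∀ B ∈ F.1, A ∩ B ∈ F.1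

/-- Ultrafilters: maximal filters. -/
def Upfamily.IsUltrafilter {X : Type*} (F : Upfamily X) : Prop :=
  F.IsFilter ∧ ∀ G : Upfamily X, G.IsFilter → F.1 ⊆ G.1 → F = G

/-- The superextension `λ(X)` of maximal linked upfamilies. -/
def lambdaS (X : Type*) : Set (Upfamily X) := {F | F.IsMaxLinked}

/-- The semigroup `N₂(X)` of linked upfamilies. -/
def N2S (X : Type*) : Set (Upfamily X) := {F | F.Linked}

/-- The semigroup `φ(X)` of filters. -/
def phiS (X : Type*) : Set (Upfamily X) := {F | F.IsFilter}

/-- The Stone-Čech extension `β(X)` of ultrafilters. -/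
def betaS (X : Type*) : Set (Upfamily X) := {F | F.IsUltrafilter}

section SemigroupProps

variable {M : Type*} [Mul M]

/-- A subset closed under multiplication (i.e. a subsemigroup). -/
def mulClosed (S : Set M) : Prop := ∀ a ∈ S, ∀ b ∈ S, a * b ∈ S

/-- The operation is commutative on `S`. -/
def commOn (S : Set M) : Prop := ∀ a ∈ S, ∀ b ∈ S, a * b = b * a

/-- The idempotents of `S` commute. -/
def idemCommOn (S : Set M) : Prop :=
  ∀ a ∈ S, ∀ b ∈ S, a * a = a → b * b = b → a * b = b * a

/-- `S` is an inverse semigroup: every element has a unique inverse in `S`. -/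
def inverseOn (S : Set M) : Prop :=
  ∀ a ∈ S, ∃! b, b ∈ S ∧ a * b * a = a ∧ b * a * b = b

/-- `H` is a subgroup of the ambient multiplicative structure:
it is closed under multiplication and carries a group structure. -/
def IsSubgroupIn (H : Set M) : Prop :=
  (∀ a ∈ H, ∀ b ∈ H, a * b ∈ H) ∧
    ∃ e ∈ H, (∀ a ∈ H, e * a = a ∧ a * e = a) ∧ ∀ a ∈ H, ∃ b ∈ H, a * b = e ∧ b * a = e

/-- `S` is a Clifford semigroup: a union of groups. -/
def cliffordOn (S : Set M) : Prop := ∀ a ∈ S, ∃ H ⊆ S, IsSubgroupIn H ∧ a ∈ H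

/-- `S` is regular in `T`: every `a ∈ S` satisfies `a ∈ a T a`. -/
def regularIn (S T : Set M) : Prop := ∀ a ∈ S, ∃ b ∈ T, a * b * a = a

/-- `ppow a n = a^(n+1)`: positive powers in a semigroup. -/
def ppow (a : M) : ℕ → M
  | 0 => a
  | n + 1 => ppow a n * a

/-- `S` is sub-Clifford: `x^{n+1} = x^{m+1}` implies `x^n = x^m` for positive `n < m`. -/
def subCliffordOn (S : Set M) : Prop :=
  ∀ a ∈ S, ∀ n m : ℕ, n < m → ppow a (n + 1) = ppow a (m + 1) → ppow a n = ppow a m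

end SemigroupProps

/-- The cyclic group `Cₙ` of order `n`. -/
abbrev Cgrp (n : ℕ) : Type := Multiplicative (ZMod n)

/-- The linear semilattice `Lₙ = {0,…,n-1}` with the operation of minimum. -/
def L (n : ℕ) : Type := Fin n

instance {n : ℕ} : Mul (L n) :=
  ⟨fun a b => show Fin n from min (show Fin n from a) (show Fin n from b)⟩

/-- The disjoint ordered union `X ⊔ Y` of two semigroups, in which
`x * y = y * x = x` for `x ∈ X` and `y ∈ Y`. -/
abbrev OSum (A B : Type*) : Type _ := A ⊕ B

instance {A B : Type*} [Mul A] [Mul B] : Mul (OSum A B) :=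
  ⟨fun x y =>
    match x, y with
    | Sum.inl a, Sum.inl a' => Sum.inl (a * a')
    | Sum.inl a, Sum.inr _ => Sum.inl a
    | Sum.inr _, Sum.inl a => Sum.inl a
    | Sum.inr b, Sum.inr b' => Sum.inr (b * b')⟩

/-- `M` is isomorphic to the sub-semigroup `S` of `N`: there is an injective
operation-preserving map of `M` onto `S`. -/
def MulIsoOnto (M : Type*) [Mul M] {N : Type*} [Mul N] (S : Set N) : Prop :=
  ∃ f : M → N, Function.Injective f ∧ Set.range f = S ∧ ∀ x y : M, f (x * y) = f x * f y

section Aux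

open Function

namespace UpAux

variable {X : Type*}

theorem upf_nonempty {F : Upfamily X} {A : Set X} (hA : A ∈ F.1) : A.Nonempty :=
  F.2.2.1 A hA

theorem upf_up {F : Upfamily X} {A B : Set X} (hA : A ∈ F.1) (hAB : A ⊆ B) : B ∈ F.1 :=
  F.2.2.2 A hA B hAB

theorem upf_ext {F G : Upfamily X} (h : F.1 = G.1) : F = G := Subtype.ext h

variable [Semigroup X]

theorem mem_mul {F G : Upfamily X} {C : Set X} :
    C ∈ (F * G).1 ↔ {a | {y | a * y ∈ C} ∈ G.1} ∈ F.1 := by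
  constructor
  · rintro ⟨A, hA, B, hB, hsub⟩
    refine upf_up hA fun a ha => ?_
    refine upf_up (hB a ha) fun y hy => ?_
    exact hsub (Set.mem_biUnion ha ⟨y, hy, rfl⟩)
  · intro h
    refine ⟨_, h, fun a => {y | a * y ∈ C}, fun a ha => ha, ?_⟩
    rintro z hz
    simp only [Set.mem_iUnion, Set.mem_image] at hz
    obtain ⟨a, ha, y, hy, rfl⟩ := hz
    exact hy

instance : Semigroup (Upfamily X) where
  mul_assoc F G H := by
    apply upf_ext
    ext C
    show C ∈ (F * G * H).1 ↔ C ∈ (F * (G * H)).1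
    simp only [mem_mul, Set.mem_setOf_eq, mul_assoc]

local notation "pr" => Upfamily.principal

theorem mem_principal {x : X} {A : Set X} : A ∈ (pr x).1 ↔ x ∈ A := Iff.rfl

theorem principal_mul {x y : X} : (pr x) * (pr y) = pr (x * y) := by
  apply upf_ext; ext C
  show C ∈ ((pr x) * (pr y)).1 ↔ _
  rw [mem_mul]
  exact Iff.rfl

theorem principal_inj {x y : X} (h : pr x = pr y) : x = y := by
  have : ({x} : Set X) ∈ (pr x).1 := rfl
  rw [h] at this
  exact (mem_principal.1 this).symm

theorem ppow_succ' {M : Type*} [Semigroup M] (a : M) (n : ℕ) :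
    ppow a (n + 1) = a * ppow a n := by
  induction n with
  | zero => rfl
  | succ n ih =>
    calc ppow a (n + 1 + 1) = ppow a (n + 1) * a := rfl
      _ = (a * ppow a n) * a := by rw [ih]
      _ = a * (ppow a n * a) := mul_assoc _ _ _
      _ = a * ppow a (n + 1) := rfl

theorem ppow_principal (x : X) (n : ℕ) : ppow (pr x) n = pr (ppow x n) := by
  induction n with
  | zero => rfl
  | succ n ih => show ppow (pr x) n * pr x = _; rw [ih, principal_mul]; rfl

end UpAux

end Aux
section Aux2

open Function

namespace UpAux

variable {X : Type*} [Semigroup X]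

/-- tail upfamily of a sequence -/
def tailF (c : ℕ → X) : Upfamily X :=
  ⟨{A | ∃ k, ∀ j, k ≤ j → c j ∈ A},
    ⟨univ, 0, fun _ _ => mem_univ _⟩,
    fun A hA => hA.elim fun k hk => ⟨c k, hk k le_rfl⟩,
    fun A hA B hAB => hA.elim fun k hk => ⟨k, fun j hj => hAB (hk j hj)⟩⟩

theorem mem_tailF {c : ℕ → X} {A : Set X} :
    A ∈ (tailF c).1 ↔ ∃ k, ∀ j, k ≤ j → c j ∈ A := Iff.rfl

/-- upfamily of sets meeting a sequence infinitely often -/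
def infF (c : ℕ → X) : Upfamily X :=
  ⟨{A | {i | c i ∈ A}.Infinite},
    ⟨univ, by simpa using Set.infinite_univ (α := ℕ)⟩,
    fun A hA => by obtain ⟨i, hi⟩ := hA.nonempty; exact ⟨c i, hi⟩,
    fun A hA B hAB => hA.mono fun i hi => hAB hi⟩

theorem mem_infF {c : ℕ → X} {A : Set X} :
    A ∈ (infF c).1 ↔ {i | c i ∈ A}.Infinite := Iff.rfl

/-- K1: an infinite ascending chain of idempotents gives non-commuting idempotents. -/
theorem K1 (c : ℕ → X) (hinj : Injective c) (hc : ∀ i j, c i * c j = c (min i j))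
    (hcomm : ∀ F G : Upfamily X, F * F = F → G * G = G → F * G = G * F) : False := by
  set F := tailF c with hF
  set G : Upfamily X := ⟨{A | ∀ i, c (2 * i) ∈ A},
    ⟨univ, fun _ => mem_univ _⟩,
    fun A hA => ⟨c 0, by simpa using hA 0⟩,
    fun A hA B hAB i => hAB (hA i)⟩ with hG
  have hGmem : ∀ {A : Set X}, A ∈ G.1 ↔ ∀ i, c (2 * i) ∈ A := Iff.rfl
  have hFidem : F * F = F := by
    apply upf_ext; ext A
    show A ∈ (F * F).1 ↔ A ∈ F.1
    rw [mem_mul]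
    constructor
    · rintro ⟨k, hk⟩
      refine ⟨k, fun j hj => ?_⟩
      obtain ⟨m, hm⟩ := hk j hj
      have h2 : c j * c (max j m) ∈ A := hm (max j m) (le_max_right _ _)
      rwa [hc, min_eq_left (le_max_left _ _)] at h2
    · rintro ⟨k, hk⟩
      refine ⟨k, fun j hj => ⟨j, fun j' hj' => ?_⟩⟩
      show c j * c j' ∈ A
      rw [hc, min_eq_left hj']
      exact hk j hj
  have hGidem : G * G = G := by
    apply upf_ext; ext A
    show A ∈ (G * G).1 ↔ A ∈ G.1
    rw [mem_mul]
    constructor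
    · intro hmem
      intro i
      have h2 : c (2 * i) * c (2 * i) ∈ A := hGmem.1 (hGmem.1 hmem i) i
      rwa [hc, min_self] at h2
    · intro hA
      refine hGmem.2 fun i => hGmem.2 fun i' => ?_
      show c (2 * i) * c (2 * i') ∈ A
      rw [hc]
      rcases le_total (2 * i) (2 * i') with h | h
      · rw [min_eq_left h]; exact hA i
      · rw [min_eq_right h]; exact hA i'
  set E : Set X := range (fun i => c (2 * i)) with hE
  have hEmem : ∀ {x : X}, x ∈ E ↔ ∃ i, c (2 * i) = x := Iff.rfl
  have hEGF : E ∈ (G * F).1 := by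
    rw [mem_mul]
    refine hGmem.2 fun i => ⟨2 * i, fun j hj => ?_⟩
    show c (2 * i) * c j ∈ E
    rw [hc, min_eq_left hj]
    exact ⟨i, rfl⟩
  have hEFG : E ∉ (F * G).1 := by
    rw [mem_mul]
    rintro ⟨k, hk⟩
    have h1 : c (2 * k + 1) * c (2 * (2 * k + 1)) ∈ E :=
      hGmem.1 (hk (2 * k + 1) (by omega)) (2 * k + 1)
    rw [hc, min_eq_left (by omega)] at h1
    obtain ⟨i₀, hi₀⟩ := hEmem.1 h1
    have := hinj hi₀
    omega
  exact hEFG (hcomm F G hFidem hGidem ▸ hEGF)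

/-- K2: an infinite descending chain of idempotents gives non-commuting idempotents. -/
theorem K2 (c : ℕ → X) (hinj : Injective c) (hc : ∀ i j, c i * c j = c (max i j))
    (hcomm : ∀ F G : Upfamily X, F * F = F → G * G = G → F * G = G * F) : False := by
  set F := tailF c with hF
  set G := infF c with hG
  have hFidem : F * F = F := by
    apply upf_ext; ext A
    show A ∈ (F * F).1 ↔ A ∈ F.1
    rw [mem_mul]
    constructor
    · rintro ⟨k, hk⟩
      obtain ⟨m, hm⟩ := hk k le_rfl
      refine ⟨max k m, fun t ht => ?_⟩
      have h2 : c k * c t ∈ A := hm t (le_trans (le_max_right _ _) ht)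
      rwa [hc, max_eq_right (le_trans (le_max_left _ _) ht)] at h2
    · rintro ⟨k, hk⟩
      refine ⟨k, fun j hj => ⟨k, fun j' hj' => ?_⟩⟩
      show c j * c j' ∈ A
      rw [hc]
      exact hk _ (le_trans hj (le_max_left _ _))
  have hGidem : G * G = G := by
    apply upf_ext; ext A
    show A ∈ (G * G).1 ↔ A ∈ G.1
    rw [mem_mul]
    constructor
    · intro hmem
      obtain ⟨i₀, hi₀⟩ := (mem_infF.1 hmem).nonempty
      have h4 : {j | c (max i₀ j) ∈ A}.Infinite := by
        have h3 : {j | c (max i₀ j) ∈ A} = {j | c j ∈ {y | c i₀ * y ∈ A}} := by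
          ext j
          show c (max i₀ j) ∈ A ↔ c i₀ * c j ∈ A
          rw [hc]
        rw [h3]; exact mem_infF.1 hi₀
      have h2 := h4.diff (Set.finite_Iio i₀)
      refine mem_infF.2 (h2.mono fun j hj => ?_)
      have hj2 : i₀ ≤ j := not_lt.1 hj.2
      have hj1 : c (max i₀ j) ∈ A := hj.1
      show c j ∈ A
      rwa [max_eq_right hj2] at hj1
    · intro hA
      refine mem_infF.2 ?_
      have key : ∀ i, c i ∈ {a | {y | a * y ∈ A} ∈ G.1} := by
        intro i
        show {y | c i * y ∈ A} ∈ G.1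
        refine mem_infF.2 (((mem_infF.1 hA).diff (Set.finite_Iio i)).mono ?_)
        rintro j ⟨hj1, hj2⟩
        have hj2' : i ≤ j := not_lt.1 hj2
        show c i * c j ∈ A
        rw [hc, max_eq_right hj2']
        exact hj1
      exact Set.infinite_of_injective_forall_mem (f := fun i : ℕ => i)
        (fun a b hab => hab) fun i => key i
  have hGF_sub : ∀ {A : Set X}, A ∈ (G * F).1 → A ∈ F.1 := by
    intro A hA
    rw [mem_mul] at hA
    obtain ⟨i₀, hi₀⟩ := (mem_infF.1 hA).nonempty
    obtain ⟨m, hm⟩ := hi₀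
    refine ⟨max i₀ m, fun t ht => ?_⟩
    have h2 : c i₀ * c t ∈ A := hm t (le_trans (le_max_right _ _) ht)
    rwa [hc, max_eq_right (le_trans (le_max_left _ _) ht)] at h2
  set E : Set X := range (fun i => c (2 * i)) with hE
  have hEmem : ∀ {x : X}, x ∈ E ↔ ∃ i, c (2 * i) = x := Iff.rfl
  have hEFG : E ∈ (F * G).1 := by
    rw [mem_mul]
    refine ⟨0, fun j _ => ?_⟩
    show {y | c j * y ∈ E} ∈ G.1
    refine mem_infF.2 (Set.infinite_of_injective_forall_mem
      (f := fun t : ℕ => 2 * (j + t)) (fun a b hab => by dsimp only at hab; omega) fun t => ?_)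
    show c j * c (2 * (j + t)) ∈ E
    rw [hc, max_eq_right (by omega)]
    exact ⟨j + t, rfl⟩
  have hEF : E ∉ F.1 := by
    rintro ⟨k, hk⟩
    obtain ⟨i₀, hi₀⟩ := hEmem.1 (hk (2 * k + 1) (by omega))
    have := hinj hi₀
    omega
  exact hEF (hGF_sub (hcomm F G hFidem hGidem ▸ hEFG))

/-- K3: an element of infinite order gives non-commuting idempotents. -/
theorem K3 (c : ℕ → X) (hinj : Injective c) (hc : ∀ i j, c i * c j = c (i + j + 1))
    (hcomm : ∀ F G : Upfamily X, F * F = F → G * G = G → F * G = G * F) : False := by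
  set F := tailF c with hF
  set G := infF c with hG
  have hFidem : F * F = F := by
    apply upf_ext; ext A
    show A ∈ (F * F).1 ↔ A ∈ F.1
    rw [mem_mul]
    constructor
    · rintro ⟨k, hk⟩
      obtain ⟨m, hm⟩ := hk k le_rfl
      refine ⟨k + m + 1, fun t ht => ?_⟩
      have h2 : c k * c (t - k - 1) ∈ A := hm (t - k - 1) (by omega)
      rwa [hc, show k + (t - k - 1) + 1 = t by omega] at h2
    · rintro ⟨k, hk⟩
      refine ⟨k, fun j hj => ⟨0, fun j' _ => ?_⟩⟩
      show c j * c j' ∈ A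
      rw [hc]
      exact hk _ (by omega)
  have hGidem : G * G = G := by
    apply upf_ext; ext A
    show A ∈ (G * G).1 ↔ A ∈ G.1
    rw [mem_mul]
    constructor
    · intro hmem
      obtain ⟨i₀, hi₀⟩ := (mem_infF.1 hmem).nonempty
      have h1 : {j | c (i₀ + j + 1) ∈ A}.Infinite := by
        have h3 : {j | c (i₀ + j + 1) ∈ A} = {j | c j ∈ {y | c i₀ * y ∈ A}} := by
          ext j
          show c (i₀ + j + 1) ∈ A ↔ c i₀ * c j ∈ A
          rw [hc]
        rw [h3]; exact mem_infF.1 hi₀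
      have h2 := h1.image (Set.injOn_of_injective
        (fun a b hab => by dsimp only at hab; omega : Injective (fun j => i₀ + j + 1)))
      refine mem_infF.2 (h2.mono ?_)
      rintro t ⟨j, hj, rfl⟩
      exact hj
    · intro hA
      refine mem_infF.2 ?_
      have key : ∀ i, c i ∈ {a | {y | a * y ∈ A} ∈ G.1} := by
        intro i
        show {y | c i * y ∈ A} ∈ G.1
        have h1 : ({t | c t ∈ A} \ Set.Iio (i + 1)).Infinite :=
          (mem_infF.1 hA).diff (Set.finite_Iio (i + 1))
        have h2 := h1.preimage (f := fun j : ℕ => i + j + 1) ?_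
        · refine mem_infF.2 (h2.mono fun j hj => ?_)
          show c i * c j ∈ A
          rw [hc]
          exact hj.1
        · rintro t ⟨ht1, ht2⟩
          have ht2' : i + 1 ≤ t := not_lt.1 ht2
          exact ⟨t - i - 1, show i + (t - i - 1) + 1 = t by omega⟩
      exact Set.infinite_of_injective_forall_mem (f := fun i : ℕ => i)
        (fun a b hab => hab) fun i => key i
  have hGF_sub : ∀ {A : Set X}, A ∈ (G * F).1 → A ∈ F.1 := by
    intro A hA
    rw [mem_mul] at hA
    obtain ⟨i₀, hi₀⟩ := (mem_infF.1 hA).nonempty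
    obtain ⟨m, hm⟩ := hi₀
    refine ⟨i₀ + m + 1, fun t ht => ?_⟩
    have h2 : c i₀ * c (t - i₀ - 1) ∈ A := hm (t - i₀ - 1) (by omega)
    rwa [hc, show i₀ + (t - i₀ - 1) + 1 = t by omega] at h2
  set E : Set X := range (fun i => c (2 * i)) with hE
  have hEmem : ∀ {x : X}, x ∈ E ↔ ∃ i, c (2 * i) = x := Iff.rfl
  have hEFG : E ∈ (F * G).1 := by
    rw [mem_mul]
    refine ⟨0, fun j _ => ?_⟩
    show {y | c j * y ∈ E} ∈ G.1
    refine mem_infF.2 (Set.infinite_of_injective_forall_mem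
      (f := fun t : ℕ => j + 1 + 2 * t) (fun a b hab => by dsimp only at hab; omega) fun t => ?_)
    show c j * c (j + 1 + 2 * t) ∈ E
    rw [hc, show j + (j + 1 + 2 * t) + 1 = 2 * (j + t + 1) by omega]
    exact ⟨j + t + 1, rfl⟩
  have hEF : E ∉ F.1 := by
    rintro ⟨k, hk⟩
    obtain ⟨i₀, hi₀⟩ := hEmem.1 (hk (2 * k + 1) (by omega))
    have := hinj hi₀
    omega
  exact hEF (hGF_sub (hcomm F G hFidem hGidem ▸ hEFG))

/-- K4: a cyclic subgroup of order `d ≥ 2` gives non-commuting idempotents. -/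
theorem K4 (d : ℕ) (hd : 1 < d) (h : ZMod d → X) (hinj : Injective h)
    (hc : ∀ i j, h i * h j = h (i + j))
    (hcomm : ∀ F G : Upfamily X, F * F = F → G * G = G → F * G = G * F) : False := by
  haveI : NeZero d := ⟨by omega⟩
  haveI : Fact (1 < d) := ⟨hd⟩
  set F : Upfamily X := ⟨{A | ∃ i, h i ∈ A},
    ⟨univ, 0, mem_univ _⟩,
    fun A hA => hA.elim fun i hi => ⟨h i, hi⟩,
    fun A hA B hAB => hA.elim fun i hi => ⟨i, hAB hi⟩⟩ with hFdef
  set G : Upfamily X := ⟨{A | ∀ i, h i ∈ A},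
    ⟨univ, fun _ => mem_univ _⟩,
    fun A hA => ⟨h 0, hA 0⟩,
    fun A hA B hAB i => hAB (hA i)⟩ with hGdef
  have hFmem : ∀ {A : Set X}, A ∈ F.1 ↔ ∃ i, h i ∈ A := Iff.rfl
  have hGmem : ∀ {A : Set X}, A ∈ G.1 ↔ ∀ i, h i ∈ A := Iff.rfl
  have hFidem : F * F = F := by
    apply upf_ext; ext A
    show A ∈ (F * F).1 ↔ A ∈ F.1
    rw [mem_mul]
    constructor
    · rintro ⟨i, j, hj⟩
      have h2 : h i * h j ∈ A := hj
      rw [hc] at h2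
      exact ⟨i + j, h2⟩
    · rintro ⟨t, ht⟩
      refine ⟨t, 0, ?_⟩
      show h t * h 0 ∈ A
      rw [hc, add_zero]
      exact ht
  have hGidem : G * G = G := by
    apply upf_ext; ext A
    show A ∈ (G * G).1 ↔ A ∈ G.1
    rw [mem_mul]
    constructor
    · intro hmem t
      have h2 : h t * h 0 ∈ A := hGmem.1 (hGmem.1 hmem t) 0
      rwa [hc, add_zero] at h2
    · intro hA
      refine hGmem.2 fun i => hGmem.2 fun j => ?_
      show h i * h j ∈ A
      rw [hc]; exact hA _
  have hGF : ({h 0} : Set X) ∈ (G * F).1 := by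
    rw [mem_mul]
    refine hGmem.2 fun i => hFmem.2 ⟨-i, ?_⟩
    show h i * h (-i) ∈ ({h 0} : Set X)
    rw [hc]
    simp
  have hFG : ({h 0} : Set X) ∉ (F * G).1 := by
    rw [mem_mul]
    rintro hmem
    obtain ⟨i, hi⟩ := hFmem.1 hmem
    have h2 : h i * h (1 - i) ∈ ({h 0} : Set X) := hGmem.1 hi (1 - i)
    rw [hc] at h2
    simp only [Set.mem_singleton_iff] at h2
    have h1 : i + (1 - i) = (1 : ZMod d) := by ring
    rw [h1] at h2
    exact one_ne_zero (hinj h2)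
  exact hFG (hcomm F G hFidem hGidem ▸ hGF)

end UpAux

end Aux2
section Aux3

open Function

namespace UpAux

variable {X : Type*} [Semigroup X]

local notation "pr" => Upfamily.principal

/-- idempotents of `X` commute if idempotent upfamilies commute -/
theorem idem_comm
    (hcomm : ∀ F G : Upfamily X, F * F = F → G * G = G → F * G = G * F)
    {e f : X} (he : e * e = e) (hf : f * f = f) : e * f = f * e := by
  have h1 : (pr e) * (pr e) = pr e := by rw [principal_mul, he]
  have h2 : (pr f) * (pr f) = pr f := by rw [principal_mul, hf]
  have := hcomm _ _ h1 h2
  rw [principal_mul, principal_mul] at this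
  exact principal_inj this

section Delta

variable {e f : X} (he : e * e = e) (hf : f * f = f) (hef : e * f = f * e)

/-- The triangle upfamily on `{e, f, ef}`. -/
def delta (e f : X) : Upfamily X :=
  ⟨{A | (e ∈ A ∧ f ∈ A) ∨ (e ∈ A ∧ e * f ∈ A) ∨ (f ∈ A ∧ e * f ∈ A)},
    ⟨univ, Or.inl ⟨mem_univ _, mem_univ _⟩⟩,
    fun A hA => by rcases hA with ⟨h1, _⟩ | ⟨h1, _⟩ | ⟨h1, _⟩ <;> exact ⟨_, h1⟩,
    fun A hA B hAB => by
      rcases hA with ⟨h1, h2⟩ | ⟨h1, h2⟩ | ⟨h1, h2⟩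
      · exact Or.inl ⟨hAB h1, hAB h2⟩
      · exact Or.inr (Or.inl ⟨hAB h1, hAB h2⟩)
      · exact Or.inr (Or.inr ⟨hAB h1, hAB h2⟩)⟩

theorem mem_delta {A : Set X} :
    A ∈ (delta e f).1 ↔
      (e ∈ A ∧ f ∈ A) ∨ (e ∈ A ∧ e * f ∈ A) ∨ (f ∈ A ∧ e * f ∈ A) := Iff.rfl

include he hf hef

theorem hgg : (e * f) * (e * f) = e * f := by
  calc (e * f) * (e * f) = e * ((f * e) * f) := by simp only [mul_assoc]
    _ = e * ((e * f) * f) := by rw [hef]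
    _ = (e * e) * (f * f) := by simp only [mul_assoc]
    _ = e * f := by rw [he, hf]

theorem heg : e * (e * f) = e * f := by rw [← mul_assoc, he]

theorem hge : (e * f) * e = e * f := by
  rw [hef, mul_assoc, he]

theorem hgf : (e * f) * f = e * f := by rw [mul_assoc, hf]

theorem hfg : f * (e * f) = e * f := by
  rw [hef, ← mul_assoc, hf]

theorem delta_sq : delta e f * delta e f = pr (e * f) := by
  apply upf_ext; ext A
  show A ∈ (delta e f * delta e f).1 ↔ (e * f) ∈ A
  rw [mem_mul]
  constructor
  · intro hS
    have keyE : {y | e * y ∈ A} ∈ (delta e f).1 → e * f ∈ A := by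
      intro hmem
      rcases mem_delta.1 hmem with ⟨_, h2⟩ | ⟨_, h2⟩ | ⟨_, h2⟩
      · exact h2
      · have h3 : e * (e * f) ∈ A := h2
        rwa [heg he hf hef] at h3
      · have h3 : e * (e * f) ∈ A := h2
        rwa [heg he hf hef] at h3
    have keyF : {y | f * y ∈ A} ∈ (delta e f).1 → e * f ∈ A := by
      intro hmem
      rcases mem_delta.1 hmem with ⟨h1, _⟩ | ⟨_, h2⟩ | ⟨_, h2⟩
      · have h3 : f * e ∈ A := h1
        rwa [← hef] at h3
      · have h3 : f * (e * f) ∈ A := h2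
        rwa [hfg he hf hef] at h3
      · have h3 : f * (e * f) ∈ A := h2
        rwa [hfg he hf hef] at h3
    rcases mem_delta.1 hS with ⟨h1, _⟩ | ⟨h1, _⟩ | ⟨h1, _⟩
    · exact keyE h1
    · exact keyE h1
    · exact keyF h1
  · intro hg
    refine mem_delta.2 (Or.inl ⟨?_, ?_⟩)
    · refine mem_delta.2 (Or.inr (Or.inr ⟨?_, ?_⟩))
      · show e * f ∈ A; exact hg
      · show e * (e * f) ∈ A; rwa [heg he hf hef]
    · refine mem_delta.2 (Or.inr (Or.inl ⟨?_, ?_⟩))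
      · show f * e ∈ A; rwa [← hef]
      · show f * (e * f) ∈ A; rwa [hfg he hf hef]

theorem delta_cube : pr (e * f) * delta e f = pr (e * f) := by
  apply upf_ext; ext A
  show A ∈ (pr (e * f) * delta e f).1 ↔ (e * f) ∈ A
  rw [mem_mul]
  show {y | (e * f) * y ∈ A} ∈ (delta e f).1 ↔ _
  constructor
  · intro hS
    rcases mem_delta.1 hS with ⟨h1, _⟩ | ⟨h1, _⟩ | ⟨h1, _⟩
    · have : (e * f) * e ∈ A := h1
      rwa [hge he hf hef] at this
    · have : (e * f) * e ∈ A := h1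
      rwa [hge he hf hef] at this
    · have : (e * f) * f ∈ A := h1
      rwa [hgf he hf hef] at this
  · intro hg
    refine mem_delta.2 (Or.inl ⟨?_, ?_⟩)
    · show (e * f) * e ∈ A; rwa [hge he hf hef]
    · show (e * f) * f ∈ A; rwa [hgf he hf hef]

theorem delta_ne (hne : e * f ≠ e ∧ e * f ≠ f) : delta e f ≠ pr (e * f) := by
  intro h
  have h1 : ({e, f} : Set X) ∈ (delta e f).1 :=
    mem_delta.2 (Or.inl ⟨Or.inl rfl, Or.inr rfl⟩)
  rw [h] at h1
  have h2 : e * f ∈ ({e, f} : Set X) := h1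
  rcases h2 with h2 | h2
  · exact hne.1 h2
  · exact hne.2 h2

theorem delta_not_regular (hne : e * f ≠ e ∧ e * f ≠ f) (W : Upfamily X) :
    delta e f * W * delta e f ≠ delta e f := by
  intro heq
  have hef12 : ({e, f} : Set X) ∈ (delta e f).1 :=
    mem_delta.2 (Or.inl ⟨Or.inl rfl, Or.inr rfl⟩)
  rw [← heq, mem_mul] at hef12
  set S1 : Set X := {a | {y | a * y ∈ ({e, f} : Set X)} ∈ (delta e f).1} with hS1
  -- step i
  have stepi : ∀ a : X, a * (e * f) ∉ ({e, f} : Set X) := by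
    intro a hag
    have h1 : (a * (e * f)) * (e * f) = a * (e * f) := by
      rw [mul_assoc, hgg he hf hef]
    rcases hag with hag | hag
    · rw [hag, heg he hf hef] at h1
      exact hne.1 h1
    · have hag' : a * (e * f) = f := hag
      rw [hag', hfg he hf hef] at h1
      exact hne.2 h1
  -- step ii
  have stepii : ∀ a ∈ S1, a * e = e ∧ a * f = f := by
    intro a ha
    have hmem : {y | a * y ∈ ({e, f} : Set X)} ∈ (delta e f).1 := ha
    have hae_af : a * e ∈ ({e, f} : Set X) ∧ a * f ∈ ({e, f} : Set X) := by
      rcases mem_delta.1 hmem with ⟨h1, h2⟩ | ⟨h1, h2⟩ | ⟨h1, h2⟩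
      · exact ⟨h1, h2⟩
      · exact absurd h2 (stepi a)
      · exact absurd h2 (stepi a)
    obtain ⟨hae, haf⟩ := hae_af
    have hae' : a * e = e := by
      rcases hae with h | h
      · exact h
      · exfalso
        have h' : a * e = f := h
        have h3 : a * (e * f) = f := by rw [← mul_assoc, h', hf]
        exact stepi a (by rw [h3]; exact Or.inr rfl)
    have haf' : a * f = f := by
      rcases haf with h | h
      · exfalso
        have h3 : a * (e * f) = e := by rw [hef, ← mul_assoc, h, he]
        exact stepi a (by rw [h3]; exact Or.inl rfl)
      · exact h
    exact ⟨hae', haf'⟩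
  -- step iii
  rw [mem_mul] at hef12
  set S2 : Set X := {p | {y | p * y ∈ S1} ∈ W.1} with hS2
  have hS2mem : S2 ∈ (delta e f).1 := hef12
  have case_g : e * f ∈ S2 → False := by
    intro hg
    obtain ⟨b, hb⟩ := upf_nonempty (hg : {y | (e * f) * y ∈ S1} ∈ W.1)
    have hab : (e * f) * b ∈ S1 := hb
    obtain ⟨haee, _⟩ := stepii _ hab
    have hga : (e * f) * ((e * f) * b) = (e * f) * b := by
      rw [← mul_assoc, hgg he hf hef]
    have hkey : (e * f) * e = e := by
      calc (e * f) * e = (e * f) * (((e * f) * b) * e) := by rw [haee]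
        _ = ((e * f) * ((e * f) * b)) * e := by simp only [mul_assoc]
        _ = ((e * f) * b) * e := by rw [hga]
        _ = e := haee
    rw [hge he hf hef] at hkey
    exact hne.1 hkey
  have case_e : e ∈ S2 → False := by
    intro hg
    obtain ⟨b, hb⟩ := upf_nonempty (hg : {y | e * y ∈ S1} ∈ W.1)
    have hab : e * b ∈ S1 := hb
    obtain ⟨_, haff⟩ := stepii _ hab
    have hea : e * (e * b) = e * b := by rw [← mul_assoc, he]
    have hkey : e * f = f := by
      calc e * f = e * ((e * b) * f) := by rw [haff]
        _ = (e * (e * b)) * f := by simp only [mul_assoc]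
        _ = (e * b) * f := by rw [hea]
        _ = f := haff
    exact hne.2 hkey
  rcases mem_delta.1 hS2mem with ⟨h1, _⟩ | ⟨_, h2⟩ | ⟨_, h2⟩
  · exact case_e h1
  · exact case_g h2
  · exact case_g h2

end Delta

/-- linearity of idempotents under hypothesis (3) -/
theorem elinear
    (hcomm : ∀ F G : Upfamily X, F * F = F → G * G = G → F * G = G * F)
    (hsr : subCliffordOn (univ : Set (Upfamily X)) ∨
      ∀ F : Upfamily X, ∃ G, F * G * F = F)
    {e f : X} (he : e * e = e) (hf : f * f = f) : e * f = e ∨ e * f = f := by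
  by_contra hcon
  push_neg at hcon
  have hef : e * f = f * e := idem_comm hcomm he hf
  rcases hsr with hS | hR
  · have h1 : ppow (delta e f) 1 = ppow (delta e f) 2 := by
      show delta e f * delta e f = (delta e f * delta e f) * delta e f
      rw [delta_sq he hf hef, delta_cube he hf hef]
    have h2 := hS (delta e f) (mem_univ _) 0 1 (by omega) h1
    have h3 : delta e f = delta e f * delta e f := h2
    rw [delta_sq he hf hef] at h3
    exact delta_ne he hf hef hcon h3
  · obtain ⟨W, hW⟩ := hR (delta e f)
    exact delta_not_regular he hf hef hcon W hW

end UpAux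

end Aux3
section Aux4

open Function

namespace UpAux

variable {X : Type*} [Semigroup X]

theorem ppow_add (x : X) (i j : ℕ) : ppow x i * ppow x j = ppow x (i + j + 1) := by
  induction j with
  | zero => rfl
  | succ j ih =>
    show ppow x i * (ppow x j * x) = _
    rw [← mul_assoc, ih]
    rfl

theorem exists_aperiodic
    (hcomm : ∀ F G : Upfamily X, F * F = F → G * G = G → F * G = G * F)
    (x : X) : ∃ N, ppow x N = ppow x (N + 1) := by
  classical
  by_cases hinj : Function.Injective (fun n => ppow x n)
  · exact (K3 (fun n => ppow x n) hinj (fun i j => ppow_add x i j) hcomm).elim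
  · rw [Function.not_injective_iff] at hinj
    obtain ⟨a, b, hab, hne⟩ := hinj
    have hQ : ∃ t, ∃ N, ppow x N = ppow x (N + t + 1) := by
      rcases Nat.lt_or_ge a b with h | h
      · exact ⟨b - a - 1, a, by rw [hab]; congr 1; omega⟩
      · have h' : b < a := by omega
        exact ⟨a - b - 1, b, by rw [← hab]; congr 1; omega⟩
    obtain ⟨N, hN⟩ := Nat.find_spec hQ
    set d0 := Nat.find hQ with hd0
    rcases Nat.eq_zero_or_pos d0 with h0 | hpos
    · rw [h0] at hN; exact ⟨N, by simpa using hN⟩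
    exfalso
    set d := d0 + 1 with hd
    have hd2 : 2 ≤ d := by omega
    haveI : NeZero d := ⟨by omega⟩
    have hNd : ppow x N = ppow x (N + d) := by rw [hN, hd, Nat.add_assoc]
    have per1 : ∀ t, ppow x (N + t + d) = ppow x (N + t) := by
      intro t
      induction t with
      | zero => simpa using hNd.symm
      | succ t ih =>
        have e1 : N + (t + 1) + d = (N + t + d) + 1 := by omega
        rw [e1]
        show ppow x (N + t + d) * x = _
        rw [ih]
        rfl
    have per : ∀ a, N ≤ a → ∀ j, ppow x (a + j * d) = ppow x a := by
      intro a ha j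
      induction j with
      | zero => simp
      | succ j ih =>
        rw [Nat.succ_mul]
        have e1 : a + (j * d + d) = (N + ((a + j * d) - N)) + d := by omega
        rw [e1, per1, show N + ((a + j * d) - N) = a + j * d by omega, ih]
    have key : ∀ a b : ℕ, N ≤ a → N ≤ b → a % d = b % d → ppow x a = ppow x b := by
      intro a b ha hb hmod
      rcases le_or_gt a b with h | h
      · obtain ⟨j, hj⟩ := (Nat.modEq_iff_dvd' h).1 hmod
        have hj' : b - a = j * d := by rw [Nat.mul_comm]; exact hj
        rw [show b = a + j * d by omega, per a ha j]
      · obtain ⟨j, hj⟩ := (Nat.modEq_iff_dvd' (le_of_lt h)).1 hmod.symm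
        have hj' : a - b = j * d := by rw [Nat.mul_comm]; exact hj
        rw [show a = b + j * d by omega, per b hb j]
    set N0 := d * (N + 1) with hN0
    have hN0N : N ≤ N0 := by
      calc N ≤ N + 1 := by omega
        _ ≤ d * (N + 1) := Nat.le_mul_of_pos_left _ (by omega)
    have hN0mod : N0 % d = 0 := by simp [hN0, Nat.mul_mod_right]
    have hd0' : d ≡ 0 [MOD d] := Nat.modEq_zero_iff_dvd.2 dvd_rfl
    have hN0' : N0 ≡ 0 [MOD d] := Nat.modEq_zero_iff_dvd.2 ⟨N + 1, rfl⟩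
    set φ : ℕ → ℕ := fun v => N0 + d + ((v + (d - 1)) % d) with hφ
    have hφN : ∀ v, N ≤ φ v := fun v =>
      le_trans hN0N (le_trans (Nat.le_add_right _ _) (Nat.le_add_right _ _))
    have base : ∀ v : ℕ, φ v ≡ v + (d - 1) [MOD d] := by
      intro v
      calc N0 + d + ((v + (d - 1)) % d) ≡ 0 + 0 + (v + (d - 1)) [MOD d] :=
            (hN0'.add hd0').add (Nat.mod_modEq _ _)
        _ = v + (d - 1) := by omega
    set h : ZMod d → X := fun i => ppow x (φ i.val) with hh
    have hhom : ∀ i j : ZMod d, h i * h j = h (i + j) := by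
      intro i j
      show ppow x (φ i.val) * ppow x (φ j.val) = ppow x (φ (i + j).val)
      rw [ppow_add]
      apply key _ _ (by have := hφN i.val; have := hφN j.val; omega) (hφN _)
      show φ i.val + φ j.val + 1 ≡ φ (i + j).val [MOD d]
      have hval : (i + j).val = (i.val + j.val) % d := ZMod.val_add i j
      calc φ i.val + φ j.val + 1
          ≡ (i.val + (d - 1)) + (j.val + (d - 1)) + 1 [MOD d] :=
            ((base i.val).add (base j.val)).add_right 1
        _ = ((i.val + j.val) + (d - 1)) + d := by omega
        _ ≡ ((i.val + j.val) + (d - 1)) + 0 [MOD d] := (Nat.ModEq.refl _).add hd0'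
        _ = (i.val + j.val) + (d - 1) := by omega
        _ ≡ ((i.val + j.val) % d) + (d - 1) [MOD d] :=
            ((Nat.mod_modEq _ _).symm).add_right _
        _ ≡ φ ((i.val + j.val) % d) [MOD d] := (base _).symm
        _ = φ ((i + j).val) := by rw [hval]
    have noteq : ∀ α β : ℕ, α < β → β < d → ppow x (N0 + d + α) ≠ ppow x (N0 + d + β) := by
      intro α β hlt hβ hcon
      have : ∃ N', ppow x N' = ppow x (N' + (β - α - 1) + 1) := by
        refine ⟨N0 + d + α, ?_⟩
        rw [hcon]
        congr 1
        omega
      have := Nat.find_min hQ (show β - α - 1 < d0 by omega) this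
      exact this
    have hinj' : Function.Injective h := by
      intro i j hij
      have hij' : ppow x (N0 + d + ((i.val + (d - 1)) % d)) =
          ppow x (N0 + d + ((j.val + (d - 1)) % d)) := hij
      set α := (i.val + (d - 1)) % d with hα
      set β := (j.val + (d - 1)) % d with hβ
      have hαβ : α = β := by
        rcases lt_trichotomy α β with hl | he | hl
        · exact absurd hij' (noteq _ _ hl (Nat.mod_lt _ (by omega)))
        · exact he
        · exact absurd hij'.symm (noteq _ _ hl (Nat.mod_lt _ (by omega)))
      have hmodeq : i.val + (d - 1) ≡ j.val + (d - 1) [MOD d] := by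
        show (i.val + (d - 1)) % d = (j.val + (d - 1)) % d
        exact hαβ
      have hvv : i.val ≡ j.val [MOD d] := hmodeq.add_right_cancel' _
      have hv : i.val = j.val := by
        have h1 : i.val % d = j.val % d := hvv
        rwa [Nat.mod_eq_of_lt (ZMod.val_lt i), Nat.mod_eq_of_lt (ZMod.val_lt j)] at h1
      exact ZMod.val_injective d hv
    exact K4 d hd2 h hinj' hhom hcomm

end UpAux

end Aux4
section Aux5

open Function

namespace UpAux

variable {X : Type*} [Semigroup X]

local notation "pr" => Upfamily.principal

theorem regular_transfer (hreg : ∀ F : Upfamily X, ∃ G, F * G * F = F) (x : X) :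
    ∃ b, (x * b) * x = x := by
  obtain ⟨G, hG⟩ := hreg (pr x)
  have h1 : ({x} : Set X) ∈ (pr x * G * pr x).1 := by rw [hG]; exact rfl
  rw [mem_mul, mem_mul] at h1
  have h2 : {y | x * y ∈ {a : X | {y | a * y ∈ ({x} : Set X)} ∈ (pr x).1}} ∈ G.1 := h1
  obtain ⟨b, hb⟩ := upf_nonempty h2
  have h3 : ((x * b) * x : X) ∈ ({x} : Set X) := hb
  exact ⟨b, h3⟩

theorem subC_transfer (hS : subCliffordOn (univ : Set (Upfamily X))) (x : X) :
    ∀ n m : ℕ, n < m → ppow x (n + 1) = ppow x (m + 1) → ppow x n = ppow x m := by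
  intro n m hnm h
  have h1 : ppow (pr x) (n + 1) = ppow (pr x) (m + 1) := by
    rw [ppow_principal, ppow_principal, h]
  have h2 := hS (pr x) (mem_univ _) n m hnm h1
  rw [ppow_principal, ppow_principal] at h2
  exact principal_inj h2

theorem descChain
    (hcomm : ∀ F G : Upfamily X, F * F = F → G * G = G → F * G = G * F)
    (hIC : ∀ a b : X, a * a = a → b * b = b → a * b = b * a)
    (x q : X) (hxq : (x * q) * x = x) (hqx : (q * x) * q = q)
    (hneq : x * q ≠ q * x) (hcase : (x * q) * (q * x) = x * q) : False := by
  have hxq' : x * (q * x) = x := by rw [← mul_assoc]; exact hxq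
  have hqx' : q * (x * q) = q := by rw [← mul_assoc]; exact hqx
  have hff : (x * q) * (x * q) = x * q := by
    calc (x * q) * (x * q) = x * (q * (x * q)) := by simp only [mul_assoc]
      _ = x * q := by rw [hqx']
  have hhh : (q * x) * (q * x) = q * x := by
    calc (q * x) * (q * x) = q * (x * (q * x)) := by simp only [mul_assoc]
      _ = q * x := by rw [hxq']
  have hhf : (q * x) * (x * q) = x * q := by
    rw [hIC _ _ hhh hff]; exact hcase
  -- the chain
  set e : ℕ → X := fun n => Nat.rec (q * x) (fun _ g => (x * g) * q) n with he
  have Inv : ∀ n, e n * e n = e n ∧ e n * (q * x) = e n ∧ (q * x) * e n = e n := by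
    intro n
    induction n with
    | zero => exact ⟨hhh, hhh, hhh⟩
    | succ n ih =>
      obtain ⟨ih1, ih2, ih3⟩ := ih
      have step1 : q * (x * (e n * q)) = e n * q := by
        calc q * (x * (e n * q)) = ((q * x) * e n) * q := by simp only [mul_assoc]
          _ = e n * q := by rw [ih3]
      have hyy : e (n + 1) * e (n + 1) = e (n + 1) := by
        show ((x * e n) * q) * ((x * e n) * q) = (x * e n) * q
        calc ((x * e n) * q) * ((x * e n) * q)
            = x * (e n * (q * (x * (e n * q)))) := by simp only [mul_assoc]
          _ = x * (e n * (e n * q)) := by rw [step1]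
          _ = x * ((e n * e n) * q) := by simp only [mul_assoc]
          _ = x * (e n * q) := by rw [ih1]
          _ = (x * e n) * q := by simp only [mul_assoc]
      have hyf : e (n + 1) * (x * q) = e (n + 1) := by
        show ((x * e n) * q) * (x * q) = (x * e n) * q
        calc ((x * e n) * q) * (x * q) = x * (e n * (q * (x * q))) := by
              simp only [mul_assoc]
          _ = x * (e n * q) := by rw [hqx']
          _ = (x * e n) * q := by simp only [mul_assoc]
      have hfy : (x * q) * e (n + 1) = e (n + 1) := by
        show (x * q) * ((x * e n) * q) = (x * e n) * q
        calc (x * q) * ((x * e n) * q) = x * (q * (x * (e n * q))) := by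
              simp only [mul_assoc]
          _ = x * (e n * q) := by rw [step1]
          _ = (x * e n) * q := by simp only [mul_assoc]
      refine ⟨hyy, ?_, ?_⟩
      · calc e (n + 1) * (q * x) = (e (n + 1) * (x * q)) * (q * x) := by rw [hyf]
          _ = e (n + 1) * ((x * q) * (q * x)) := by rw [mul_assoc]
          _ = e (n + 1) * (x * q) := by rw [hcase]
          _ = e (n + 1) := hyf
      · calc (q * x) * e (n + 1) = (q * x) * ((x * q) * e (n + 1)) := by rw [hfy]
          _ = ((q * x) * (x * q)) * e (n + 1) := by rw [← mul_assoc]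
          _ = (x * q) * e (n + 1) := by rw [hhf]
          _ = e (n + 1) := hfy
  have hrec : ∀ n, (q * e (n + 1)) * x = e n := by
    intro n
    obtain ⟨_, ih2, ih3⟩ := Inv n
    show (q * ((x * e n) * q)) * x = e n
    have step2 : ((q * x) * e n) * (q * x) = e n := by rw [ih3]; exact ih2
    calc (q * ((x * e n) * q)) * x = ((q * x) * e n) * (q * x) := by
          simp only [mul_assoc]
      _ = e n := step2
  have P4 : ∀ n, e (n + 1) * e n = e (n + 1) := by
    intro n
    induction n with
    | zero => exact (Inv 1).2.1
    | succ n ih =>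
      obtain ⟨_, _, ih3⟩ := Inv n
      have step2 : q * (x * (e n * q)) = e n * q := by
        calc q * (x * (e n * q)) = ((q * x) * e n) * q := by simp only [mul_assoc]
          _ = e n * q := by rw [ih3]
      show ((x * e (n + 1)) * q) * ((x * e n) * q) = (x * e (n + 1)) * q
      calc ((x * e (n + 1)) * q) * ((x * e n) * q)
          = x * (e (n + 1) * (q * (x * (e n * q)))) := by simp only [mul_assoc]
        _ = x * (e (n + 1) * (e n * q)) := by rw [step2]
        _ = x * ((e (n + 1) * e n) * q) := by simp only [mul_assoc]
        _ = x * (e (n + 1) * q) := by rw [ih]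
        _ = (x * e (n + 1)) * q := by simp only [mul_assoc]
  have P5 : ∀ n k, e (n + k + 1) * e n = e (n + k + 1) := by
    intro n k
    induction k with
    | zero => exact P4 n
    | succ k ih =>
      have h1 : e (n + k + 2) * e (n + k + 1) = e (n + k + 2) := P4 (n + k + 1)
      show e (n + k + 2) * e n = e (n + k + 2)
      calc e (n + k + 2) * e n = (e (n + k + 2) * e (n + k + 1)) * e n := by rw [h1]
        _ = e (n + k + 2) * (e (n + k + 1) * e n) := mul_assoc _ _ _
        _ = e (n + k + 2) * e (n + k + 1) := by rw [ih]
        _ = e (n + k + 2) := h1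
  have P7 : ∀ n, e (n + 1) ≠ e n := by
    intro n
    induction n with
    | zero =>
      intro hEq
      have h1 : e 1 = x * q := by
        show (x * (q * x)) * q = x * q
        rw [hxq']
      have h0 : e 0 = q * x := rfl
      exact hneq (by rw [← h1, ← h0]; exact hEq)
    | succ n ih =>
      intro hEq
      have h2 : (q * e (n + 2)) * x = (q * e (n + 1)) * x := by rw [hEq]
      rw [hrec (n + 1), hrec n] at h2
      exact ih h2
  have Pinj : Function.Injective e := by
    have key : ∀ i j, i < j → e i = e j → False := by
      intro i j hlt hEq
      obtain ⟨k, rfl⟩ := Nat.exists_eq_add_of_lt hlt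
      cases k with
      | zero => exact P7 i (hEq.symm)
      | succ k =>
        have h1 : e (i + (k + 1) + 1) * e (i + 1) = e (i + (k + 1) + 1) := by
          have := P5 (i + 1) k
          rwa [show i + 1 + k + 1 = i + (k + 1) + 1 by omega] at this
        have h2 : e i * e (i + 1) = e (i + 1) * e i :=
          hIC _ _ (Inv i).1 (Inv (i + 1)).1
        have h3 : e i * e (i + 1) = e i := by
          rw [hEq, h1]
        rw [h2, P4 i] at h3
        exact P7 i h3
    intro i j hEq
    rcases lt_trichotomy i j with h | h | h
    · exact (key i j h hEq).elim
    · exact h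
    · exact (key j i h hEq.symm).elim
  have P9 : ∀ i j, e i * e j = e (max i j) := by
    intro i j
    rcases lt_trichotomy i j with h | h | h
    · rw [max_eq_right (le_of_lt h)]
      obtain ⟨k, rfl⟩ := Nat.exists_eq_add_of_lt h
      rw [hIC _ _ (Inv i).1 (Inv (i + k + 1)).1]
      exact P5 i k
    · subst h; rw [max_self]; exact (Inv i).1
    · rw [max_eq_left (le_of_lt h)]
      obtain ⟨k, rfl⟩ := Nat.exists_eq_add_of_lt h
      exact P5 j k
  exact K2 e Pinj P9 hcomm

/-- every element of `X` is idempotent under hypothesis (3) -/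
theorem band
    (hcomm : ∀ F G : Upfamily X, F * F = F → G * G = G → F * G = G * F)
    (hsr : subCliffordOn (univ : Set (Upfamily X)) ∨
      ∀ F : Upfamily X, ∃ G, F * G * F = F)
    (x : X) : x * x = x := by
  obtain ⟨N, hN⟩ := exists_aperiodic hcomm x
  rcases hsr with hS | hR
  · have step := subC_transfer hS x
    have desc : ∀ k, ppow x k = ppow x (k + 1) → ppow x 0 = ppow x 1 := by
      intro k
      induction k with
      | zero => exact id
      | succ k ih => intro hk; exact ih (step k (k + 1) (by omega) hk)
    have h0 := desc N hN
    exact h0.symm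
  · by_contra hxx
    obtain ⟨b, hb⟩ := regular_transfer hR x
    have hb' : x * (b * x) = x := by rw [← mul_assoc]; exact hb
    set q := b * (x * b) with hq
    have hxqx : (x * q) * x = x := by
      calc (x * q) * x = ((x * (b * x)) * b) * x := by rw [hq]; simp only [mul_assoc]
        _ = (x * b) * x := by rw [hb']
        _ = x := hb
    have hqx1 : q * x = b * x := by
      calc q * x = b * ((x * b) * x) := by rw [hq]; simp only [mul_assoc]
        _ = b * x := by rw [hb]
    have hqxq : (q * x) * q = q := by
      rw [hqx1]
      calc (b * x) * q = b * ((x * (b * x)) * b) := by rw [hq]; simp only [mul_assoc]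
        _ = b * (x * b) := by rw [hb']
        _ = q := by rw [hq]
    have hxq' : x * (q * x) = x := by rw [← mul_assoc]; exact hxqx
    have hqx' : q * (x * q) = q := by rw [← mul_assoc]; exact hqxq
    have hIC : ∀ a b : X, a * a = a → b * b = b → a * b = b * a := fun a b ha hb =>
      idem_comm hcomm ha hb
    have hff : (x * q) * (x * q) = x * q := by
      calc (x * q) * (x * q) = x * (q * (x * q)) := by simp only [mul_assoc]
        _ = x * q := by rw [hqx']
    have hhh : (q * x) * (q * x) = q * x := by
      calc (q * x) * (q * x) = q * (x * (q * x)) := by simp only [mul_assoc]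
        _ = q * x := by rw [hxq']
    by_cases hfh : x * q = q * x
    · -- f = h : x is in a subgroup, contradiction with aperiodicity
      have hxf : x * (x * q) = x := by rw [hfh]; exact hxq'
      have hfq' : (x * q) * q = q := by rw [hfh]; exact hqxq
      have Q : ∀ k, ppow x k * ppow q k = x * q := by
        intro k
        induction k with
        | zero => rfl
        | succ k ih =>
          have h1 : ppow x (k + 1) = x * ppow x k := ppow_succ' x k
          have h2 : ppow q (k + 1) = ppow q k * q := rfl
          rw [h1, h2]
          calc (x * ppow x k) * (ppow q k * q)
              = x * ((ppow x k * ppow q k) * q) := by simp only [mul_assoc]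
            _ = x * ((x * q) * q) := by rw [ih]
            _ = x * ((x * q) * q) := by simp only [mul_assoc]
            _ = x * q := by rw [hfq']
      have hx_f : x = x * q := by
        have h1 : ppow x N * ppow q N = x * q := Q N
        have h2 : ppow x N = x * ppow x N := by
          conv_lhs => rw [hN]
          exact ppow_succ' x N
        calc x = x * (x * q) := (hxf).symm
          _ = x * (ppow x N * ppow q N) := by rw [h1]
          _ = (x * ppow x N) * ppow q N := by rw [← mul_assoc]
          _ = ppow x N * ppow q N := by rw [← h2]
          _ = x * q := h1
      exact hxx (by rw [hx_f]; exact hff)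
    · have hlin := elinear hcomm (Or.inr hR) hff hhh
      rcases hlin with hc | hc
      · exact descChain hcomm hIC x q hxqx hqxq hfh hc
      · have hc' : (q * x) * (x * q) = q * x := by
          rw [hIC _ _ hhh hff]; exact hc
        exact descChain hcomm hIC q x hqxq hxqx (fun hh => hfh hh.symm) hc'

end UpAux

end Aux5
section Aux6

open Function

namespace UpAux

section AbstractInverse

variable {M : Type*} [Semigroup M]

theorem unique_inv_idem_comm
    (hinv : ∀ a : M, ∃! b, a * b * a = a ∧ b * a * b = b) :
    ∀ e f : M, e * e = e → f * f = f → e * f = f * e := by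
  have keyIdem : ∀ e f : M, e * e = e → f * f = f → (e * f) * (e * f) = e * f := by
    intro e f he hf
    have he' : ∀ t : M, e * (e * t) = e * t := fun t => by rw [← mul_assoc, he]
    have hf' : ∀ t : M, f * (f * t) = f * t := fun t => by rw [← mul_assoc, hf]
    obtain ⟨x, ⟨hx1, hx2⟩, hxu⟩ := hinv (e * f)
    have hx1' : e * (f * (x * (e * f))) = e * f := by
      have := hx1; simp only [mul_assoc] at this; exact this
    have hx2' : x * (e * (f * x)) = x := by
      have := hx2; simp only [mul_assoc] at this; exact this
    have hx2t : ∀ t : M, x * (e * (f * (x * t))) = x * t := by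
      intro t
      have := congrArg (fun z => z * t) hx2
      simp only [mul_assoc] at this
      exact this
    have claim1 : (e * f) * ((f * x) * e) * (e * f) = e * f := by
      simp only [mul_assoc, he', hf']
      exact hx1'
    have claim2 : ((f * x) * e) * (e * f) * ((f * x) * e) = (f * x) * e := by
      simp only [mul_assoc, he', hf']
      exact congrArg (fun z => f * z) (hx2t e)
    have hzx : (f * x) * e = x := hxu _ ⟨claim1, claim2⟩
    have xidem : x * x = x := by
      have hzz : ((f * x) * e) * ((f * x) * e) = (f * x) * e := by
        calc ((f * x) * e) * ((f * x) * e) = f * (x * (e * (f * (x * e)))) := by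
              simp only [mul_assoc]
          _ = f * (x * e) := by rw [hx2t e]
          _ = (f * x) * e := by rw [← mul_assoc]
      rw [← hzx]; exact hzz
    have hefx : e * f = x := by
      obtain ⟨y, _, hyu⟩ := hinv x
      have h1 : e * f = y := hyu (e * f) ⟨hx2, hx1⟩
      have h2 : x = y := hyu x ⟨by rw [xidem, xidem], by rw [xidem, xidem]⟩
      rw [h1, h2]
    rw [hefx]
    exact xidem
  intro e f he hf
  have he' : ∀ t : M, e * (e * t) = e * t := fun t => by rw [← mul_assoc, he]
  have hf' : ∀ t : M, f * (f * t) = f * t := fun t => by rw [← mul_assoc, hf]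
  have hEF := keyIdem e f he hf
  have hFE := keyIdem f e hf he
  have hEF' : e * (f * (e * f)) = e * f := by
    have := hEF; simp only [mul_assoc] at this; exact this
  have hFE' : f * (e * (f * e)) = f * e := by
    have := hFE; simp only [mul_assoc] at this; exact this
  obtain ⟨w, _, hwu⟩ := hinv (e * f)
  have I1 : (e * f) * (f * e) * (e * f) = e * f := by
    simp only [mul_assoc, he', hf']
    exact hEF'
  have I2 : (f * e) * (e * f) * (f * e) = f * e := by
    simp only [mul_assoc, he', hf']
    exact hFE'
  have h1 : f * e = w := hwu (f * e) ⟨I1, I2⟩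
  have h2 : e * f = w := hwu (e * f) ⟨by rw [hEF, hEF], by rw [hEF, hEF]⟩
  rw [h2, ← h1]

end AbstractInverse

variable {X : Type*} [Semigroup X]

theorem one_to_two
    (hcomm : ∀ F G : Upfamily X, F * G = G * F)
    (hidem : ∀ F : Upfamily X, F * F = F) (F : Upfamily X) :
    ∃! G : Upfamily X, F * G * F = F ∧ G * F * G = G := by
  refine ⟨F, ⟨by rw [hidem, hidem], by rw [hidem, hidem]⟩, ?_⟩
  rintro G ⟨h1, h2⟩
  have e1 : F * G = F := by
    have hstep : (F * G) * F = F * G := by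
      calc (F * G) * F = F * (G * F) := mul_assoc _ _ _
        _ = F * (F * G) := by rw [hcomm G F]
        _ = (F * F) * G := (mul_assoc _ _ _).symm
        _ = F * G := by rw [hidem]
    exact hstep.symm.trans h1
  have e2 : G * F = G := by
    have hstep : (G * F) * G = G * F := by
      calc (G * F) * G = G * (F * G) := mul_assoc _ _ _
        _ = G * (G * F) := by rw [hcomm F G]
        _ = (G * G) * F := (mul_assoc _ _ _).symm
        _ = G * F := by rw [hidem]
    exact hstep.symm.trans h2
  calc G = G * F := e2.symm
    _ = F * G := (hcomm F G).symm
    _ = F := e1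

theorem four_idem
    (hband : ∀ x : X, x * x = x) (hlin : ∀ x y : X, x * y = x ∨ x * y = y)
    (F : Upfamily X) : F * F = F := by
  apply upf_ext; ext C
  show C ∈ (F * F).1 ↔ C ∈ F.1
  rw [mem_mul]
  constructor
  · intro hU
    by_cases hex : ∃ a ∈ {a : X | {y | a * y ∈ C} ∈ F.1}, a ∉ C
    · obtain ⟨a, haU, haC⟩ := hex
      have hsub : {y | a * y ∈ C} ⊆ C := by
        intro y hy
        have hy' : a * y ∈ C := hy
        rcases hlin a y with h | h
        · exact absurd (h ▸ hy') haC
        · rwa [h] at hy'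
      exact upf_up haU hsub
    · push_neg at hex
      exact upf_up hU hex
  · intro hC
    refine upf_up hC fun a ha => ?_
    show {y | a * y ∈ C} ∈ F.1
    refine upf_up hC fun y hy => ?_
    show a * y ∈ C
    rcases hlin a y with h | h
    · rw [h]; exact ha
    · rw [h]; exact hy

theorem four_comm (hfin : Finite X)
    (hcommX : ∀ x y : X, x * y = y * x) (hband : ∀ x : X, x * x = x)
    (hlin : ∀ x y : X, x * y = x ∨ x * y = y)
    (F G : Upfamily X) : F * G = G * F := by
  haveI := hfin
  letI : LinearOrder X :=
    { le := fun a b => a * b = a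
      le_refl := hband
      le_trans := fun a b c hab hbc => by
        show a * c = a
        calc a * c = (a * b) * c := by rw [hab]
          _ = a * (b * c) := mul_assoc _ _ _
          _ = a * b := by rw [hbc]
          _ = a := hab
      le_antisymm := fun a b hab hba => by
        calc a = a * b := hab.symm
          _ = b * a := hcommX a b
          _ = b := hba
      le_total := fun a b => by
        rcases hlin a b with h | h
        · exact Or.inl h
        · refine Or.inr ?_
          show b * a = b
          rw [hcommX b a]; exact h
      toDecidableLE := fun a b => Classical.dec _ }
  have main : ∀ F G : Upfamily X, ∀ C : Set X, C ∈ (F * G).1 → C ∈ (G * F).1 := by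
    intro F G C hFG
    rw [mem_mul] at hFG ⊢
    set U : Set X := {a | {y | a * y ∈ C} ∈ G.1} with hUdef
    have hU : U ∈ F.1 := hFG
    by_cases hex : (U \ C).Nonempty
    · obtain ⟨u1, hu1, hu1min⟩ := Set.exists_min_image (U \ C) id (Set.toFinite _) hex
      have hDu1 : {y | u1 * y ∈ C} ∈ G.1 := hu1.1
      refine upf_up hDu1 fun b hb => ?_
      have hb' : u1 * b ∈ C := hb
      have hub : u1 * b = b := by
        rcases hlin u1 b with h | h
        · exact absurd (h ▸ hb') hu1.2
        · exact h
      have hbC : b ∈ C := hub ▸ hb'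
      have hble : b ≤ u1 := by
        show b * u1 = b
        rw [hcommX b u1]; exact hub
      show {y | b * y ∈ C} ∈ F.1
      refine upf_up hU fun u hu => ?_
      show b * u ∈ C
      rw [hcommX b u]
      by_cases huC : u ∈ C
      · rcases hlin u b with h | h
        · rw [h]; exact huC
        · rw [h]; exact hbC
      · have hu1u : u1 ≤ u := hu1min u ⟨hu, huC⟩
        rcases hlin u b with h | h
        · exfalso
          have hub2 : u ≤ b := h
          have h1 : u1 ≤ b := le_trans hu1u hub2
          have h2 : u1 = b := le_antisymm h1 hble
          exact hu1.2 (h2 ▸ hbC)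
        · rw [h]; exact hbC
    · rw [Set.not_nonempty_iff_eq_empty, Set.diff_eq_empty] at hex
      obtain ⟨M, hM, hMmax⟩ := Set.exists_max_image U id (Set.toFinite _) (upf_nonempty hU)
      have hDM : {y | M * y ∈ C} ∈ G.1 := hM
      refine upf_up hDM fun b hb => ?_
      have hb' : M * b ∈ C := hb
      show {y | b * y ∈ C} ∈ F.1
      refine upf_up hU fun u hu => ?_
      show b * u ∈ C
      rw [hcommX b u]
      rcases hlin u b with h | h
      · rw [h]; exact hex hu
      · have hbu : b ≤ u := by
          show b * u = b
          rw [hcommX b u]; exact h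
        have hbM : b ≤ M := le_trans hbu (hMmax u hu)
        have hMb : M * b = b := by
          rw [hcommX M b]; exact hbM
        rw [h, ← hMb]; exact hb'
  apply upf_ext; ext C
  exact ⟨fun h => main F G C h, fun h => main G F C h⟩

end UpAux

end Aux6
section Aux7

open Function

namespace UpAux

variable {X : Type*} [Semigroup X]

theorem three_to_four
    (hcomm : ∀ F G : Upfamily X, F * F = F → G * G = G → F * G = G * F)
    (hsr : subCliffordOn (univ : Set (Upfamily X)) ∨
      ∀ F : Upfamily X, ∃ G, F * G * F = F) :
    Finite X ∧ (∀ x y : X, x * y = y * x) ∧ (∀ x : X, x * x = x) ∧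
      (∀ x y : X, x * y = x ∨ x * y = y) ∧ ∃ n : ℕ, Nonempty (X ≃* L n) := by
  have hband : ∀ x : X, x * x = x := band hcomm hsr
  have hcommX : ∀ x y : X, x * y = y * x := fun x y =>
    idem_comm hcomm (hband x) (hband y)
  have hlin : ∀ x y : X, x * y = x ∨ x * y = y := fun x y =>
    elinear hcomm hsr (hband x) (hband y)
  letI : LinearOrder X :=
    { le := fun a b => a * b = a
      le_refl := hband
      le_trans := fun a b c hab hbc => by
        show a * c = a
        calc a * c = (a * b) * c := by rw [hab]
          _ = a * (b * c) := mul_assoc _ _ _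
          _ = a * b := by rw [hbc]
          _ = a := hab
      le_antisymm := fun a b hab hba => by
        calc a = a * b := hab.symm
          _ = b * a := hcommX a b
          _ = b := hba
      le_total := fun a b => by
        rcases hlin a b with h | h
        · exact Or.inl h
        · refine Or.inr ?_
          show b * a = b
          rw [hcommX b a]; exact h
      toDecidableLE := fun a b => Classical.dec _ }
  have hmul_le : ∀ a b : X, a ≤ b → a * b = a := fun a b h => h
  have hfin : Finite X := by
    by_contra hnf
    rw [not_finite_iff_infinite] at hnf
    haveI := hnf
    set u := Infinite.natEmbedding X with hu
    obtain ⟨g, hg⟩ :=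
      exists_increasing_or_nonincreasing_subseq (· < · : X → X → Prop) (fun n => u n)
    rcases hg with hg | hg
    · refine K1 (fun n => u (g n)) ?_ ?_ hcomm
      · intro a b hab
        exact g.injective (u.injective hab)
      · intro i j
        rcases lt_trichotomy i j with h | h | h
        · rw [min_eq_left (le_of_lt h)]
          exact hmul_le _ _ (le_of_lt (hg i j h))
        · subst h; rw [min_self]; exact hband _
        · rw [min_eq_right (le_of_lt h)]
          rw [hcommX]
          exact hmul_le _ _ (le_of_lt (hg j i h))
    · have hg' : ∀ m n, m < n → u (g n) < u (g m) := by
        intro m n h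
        rcases lt_trichotomy (u (g m)) (u (g n)) with hl | heq | hl
        · exact absurd hl (hg m n h)
        · exact absurd (g.injective (u.injective heq)) (Nat.ne_of_lt h)
        · exact hl
      refine K2 (fun n => u (g n)) ?_ ?_ hcomm
      · intro a b hab
        exact g.injective (u.injective hab)
      · intro i j
        rcases lt_trichotomy i j with h | h | h
        · rw [max_eq_right (le_of_lt h)]
          rw [hcommX]
          exact hmul_le _ _ (le_of_lt (hg' i j h))
        · subst h; rw [max_self]; exact hband _
        · rw [max_eq_left (le_of_lt h)]
          exact hmul_le _ _ (le_of_lt (hg' j i h))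
  haveI := hfin
  letI : Fintype X := Fintype.ofFinite X
  refine ⟨hfin, hcommX, hband, hlin, ⟨Fintype.card X, ⟨?_⟩⟩⟩
  let eqv := (monoEquivOfFin X rfl).symm
  refine
    { toFun := fun a => (eqv a : Fin (Fintype.card X))
      invFun := fun i => eqv.symm i
      left_inv := fun a => eqv.symm_apply_apply a
      right_inv := fun i => eqv.apply_symm_apply i
      map_mul' := ?_ }
  intro a b
  show eqv (a * b) = (min (eqv a) (eqv b) : Fin (Fintype.card X))
  rcases le_total a b with h | h
  · rw [hmul_le a b h]
    exact (min_eq_left ((OrderIso.le_iff_le eqv).2 h)).symm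
  · have hba : a * b = b := by rw [hcommX a b]; exact h
    rw [hba]
    exact (min_eq_right ((OrderIso.le_iff_le eqv).2 h)).symm

end UpAux

end Aux7
/-- Theorem 1.4: for a semigroup `X`, the following are equivalent:
(1) `υ(X)` is a finite semilattice;
(2) `υ(X)` is an inverse semigroup;
(3) the idempotents of `υ(X)` commute and `υ(X)` is sub-Clifford or regular;
(4) `X` is a finite linear semilattice, isomorphic to `Lₙ` for some `n ∈ ω`. -/
theorem upfamilies_inverse_characterization (X : Type*) [Semigroup X] :
    List.TFAE
      [Finite (Upfamily X) ∧ (∀ F G : Upfamily X, F * G = G * F) ∧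
          ∀ F : Upfamily X, F * F = F,
        ∀ F : Upfamily X, ∃! G : Upfamily X, F * G * F = F ∧ G * F * G = G,
        (∀ F G : Upfamily X, F * F = F → G * G = G → F * G = G * F) ∧
          (subCliffordOn (univ : Set (Upfamily X)) ∨ ∀ F : Upfamily X, ∃ G, F * G * F = F),
        Finite X ∧ (∀ x y : X, x * y = y * x) ∧ (∀ x : X, x * x = x) ∧
          (∀ x y : X, x * y = x ∨ x * y = y) ∧ ∃ n : ℕ, Nonempty (X ≃* L n)] := by
  tfae_have 1 → 2 := fun ⟨hfin, hcomm, hidem⟩ F => UpAux.one_to_two hcomm hidem F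
  tfae_have 2 → 3 := fun h2 =>
    ⟨fun F G hF hG => UpAux.unique_inv_idem_comm h2 F G hF hG,
     Or.inr fun F => by obtain ⟨G, hG, _⟩ := h2 F; exact ⟨G, hG.1⟩⟩
  tfae_have 3 → 4 := fun ⟨hic, hsr⟩ => UpAux.three_to_four hic hsr
  tfae_have 4 → 1 := fun ⟨hfin, hcommX, hband, hlin, _⟩ =>
    ⟨Finite.of_injective (fun F : Upfamily X => F.1) (fun F G h => UpAux.upf_ext h),
     fun F G => UpAux.four_comm hfin hcommX hband hlin F G,
     fun F => UpAux.four_idem hband hlin F⟩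
  tfae_finish
end

section
/- If for a semigroup X all idempotents of the semigroup β(X) of ultrafilters on X commute, then every cyclic subsemigroup {xⁿ : n ∈ ℕ} (for x ∈ X) of X is finite and every linear subsemigroup of X is finite. -/
open Set

section Aux

open Filter

attribute [local instance] Ultrafilter.mul Ultrafilter.semigroup

variable {X : Type*} [Semigroup X]

theorem mem_umul {U V : Ultrafilter X} {A : Set X} :
    A ∈ U * V ↔ {m | {n | m * n ∈ A} ∈ V} ∈ U := by
  have := Ultrafilter.eventually_mul U V (· ∈ A)
  simpa [Filter.eventually_iff] using this

/-- The embedding of mathlib ultrafilters into upfamilies. -/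
def toUp (p : Ultrafilter X) : Upfamily X :=
  ⟨{A | A ∈ p}, ⟨Set.univ, Filter.univ_mem⟩, fun A hA => Ultrafilter.nonempty_of_mem hA,
    fun A hA B hAB => Filter.mem_of_superset hA hAB⟩

theorem toUp_inj : Function.Injective (toUp (X := X)) := by
  intro p q hpq
  ext A
  exact Set.ext_iff.mp (congrArg Subtype.val hpq) A

theorem toUp_mem_betaS (p : Ultrafilter X) : toUp p ∈ betaS X := by
  refine ⟨fun A hA B hB => Filter.inter_mem hA hB, fun G hG hsub => ?_⟩
  have hback : G.1 ⊆ (toUp p).1 := by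
    intro B hB
    by_contra hBp
    have hc : Bᶜ ∈ p := Ultrafilter.compl_mem_iff_notMem.mpr hBp
    have h2 : B ∩ Bᶜ ∈ G.1 := hG B hB Bᶜ (hsub hc)
    have := G.2.2.1 _ h2
    simp at this
  exact Subtype.ext (Set.Subset.antisymm hsub hback).symm ▸ rfl

theorem toUp_mul (p q : Ultrafilter X) : toUp (p * q) = toUp p * toUp q := by
  apply Subtype.ext
  show {A | A ∈ p * q} = upMul {A | A ∈ p} {A | A ∈ q}
  ext C
  constructor
  · intro hC
    rw [Set.mem_setOf_eq, mem_umul] at hC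
    exact ⟨_, hC, fun a => {b | a * b ∈ C}, fun a ha => ha, by
      intro y hy
      simp only [Set.mem_iUnion, Set.mem_image] at hy
      obtain ⟨a, ha, b, hb, rfl⟩ := hy
      exact hb⟩
  · rintro ⟨A, hA, B, hB, hsub⟩
    rw [Set.mem_setOf_eq, mem_umul]
    refine Filter.mem_of_superset hA ?_
    intro a ha
    refine Filter.mem_of_superset (hB a ha) ?_
    intro b hb
    exact hsub (Set.mem_biUnion ha ⟨b, hb, rfl⟩)

/-- Transfer of the hypothesis: all idempotents of `Ultrafilter X` commute. -/
theorem ultra_idem_comm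
    (h : ∀ F ∈ betaS X, ∀ G ∈ betaS X, F * F = F → G * G = G → F * G = G * F)
    (p q : Ultrafilter X) (hp : p * p = p) (hq : q * q = q) : p * q = q * p := by
  apply toUp_inj
  rw [toUp_mul, toUp_mul]
  exact h _ (toUp_mem_betaS p) _ (toUp_mem_betaS q)
    (by rw [← toUp_mul, hp]) (by rw [← toUp_mul, hq])

end Aux

section Aux2

open Filter

attribute [local instance] Ultrafilter.mul Ultrafilter.semigroup

theorem umem_inter {α : Type*} {U : Ultrafilter α} {s t : Set α}
    (hs : s ∈ U) (ht : t ∈ U) : s ∩ t ∈ U :=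
  Filter.inter_mem hs ht

theorem free_ultra_on (E : Set ℕ) (hE : E.Infinite) :
    ∃ U : Ultrafilter ℕ, E ∈ U ∧ (↑U : Filter ℕ) ≤ cofinite := by
  have h : (cofinite ⊓ 𝓟 E).NeBot := by
    rw [Filter.inf_principal_neBot_iff]
    intro A hA
    have : (E \ Aᶜ).Infinite := hE.diff (by simpa using hA)
    obtain ⟨n, hn⟩ := this.nonempty
    exact ⟨n, by simpa using hn.2, hn.1⟩
  refine ⟨Ultrafilter.of (cofinite ⊓ 𝓟 E), ?_, ?_⟩
  · exact (Ultrafilter.of_le _) (mem_inf_of_right (mem_principal_self E))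
  · exact (Ultrafilter.of_le _).trans inf_le_left

theorem exists_two_free_ultra : ∃ U V : Ultrafilter ℕ, U ≠ V ∧
    (↑U : Filter ℕ) ≤ cofinite ∧ (↑V : Filter ℕ) ≤ cofinite := by
  have hev : {n : ℕ | Even n}.Infinite := by
    apply Set.infinite_of_injective_forall_mem (f := fun n : ℕ => 2 * n)
    · intro a b hab
      dsimp only at hab
      omega
    · intro n
      exact ⟨n, two_mul n⟩
  have hod : {n : ℕ | Odd n}.Infinite := by
    apply Set.infinite_of_injective_forall_mem (f := fun n : ℕ => 2 * n + 1)
    · intro a b hab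
      dsimp only at hab
      omega
    · intro n
      exact ⟨n, by ring⟩
  obtain ⟨U, hUE, hU⟩ := free_ultra_on _ hev
  obtain ⟨V, hVO, hV⟩ := free_ultra_on _ hod
  refine ⟨U, V, ?_, hU, hV⟩
  rintro rfl
  obtain ⟨n, hn1, hn2⟩ := Ultrafilter.nonempty_of_mem (umem_inter hUE hVO)
  simp only [Set.mem_setOf_eq, Nat.even_iff, Nat.odd_iff] at hn1 hn2
  omega

variable {X : Type*} [Semigroup X]

/-- Core: a chain `c` with `c m * c n = c m` (or `= c n`) for `m ≤ n`
yields non-commuting idempotents. -/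
theorem chain_noncomm_idem (c : ℕ → X) (hcinj : Function.Injective c)
    (H : (∀ m n, m ≤ n → c m * c n = c m) ∨ (∀ m n, m ≤ n → c m * c n = c n)) :
    ∃ p q : Ultrafilter X, p * p = p ∧ q * q = q ∧ p * q ≠ q * p := by
  obtain ⟨U, V, hUV, hU, hV⟩ := exists_two_free_ultra
  have hmapinj : Function.Injective (Ultrafilter.map c) := by
    intro U₁ U₂ h12
    ext A
    have : c '' A ∈ Ultrafilter.map c U₁ ↔ c '' A ∈ Ultrafilter.map c U₂ := by rw [h12]
    simpa [Ultrafilter.mem_map, Set.preimage_image_eq _ hcinj] using this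
  rcases H with H | H
  · have key : ∀ U' V' : Ultrafilter ℕ, (↑V' : Filter ℕ) ≤ cofinite →
        Ultrafilter.map c U' * Ultrafilter.map c V' = Ultrafilter.map c U' := by
      intro U' V' hV'
      have hco : ∀ m : ℕ, (Set.Iio m)ᶜ ∈ V' :=
        fun m => hV' (Set.Finite.compl_mem_cofinite (Set.finite_Iio m))
      ext A
      rw [mem_umul, Ultrafilter.mem_map]
      have hiff : ∀ m : ℕ, ({n | c m * n ∈ A} ∈ Ultrafilter.map c V') ↔ c m ∈ A := by
        intro m
        rw [Ultrafilter.mem_map]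
        constructor
        · intro hmem
          by_contra hcm
          obtain ⟨n, hn1, hn2⟩ := Ultrafilter.nonempty_of_mem (umem_inter hmem (hco m))
          simp only [Set.mem_compl_iff, Set.mem_Iio, not_lt] at hn2
          have hn1' : c m * c n ∈ A := hn1
          rw [H m n hn2] at hn1'
          exact hcm hn1'
        · intro hcm
          refine Filter.mem_of_superset (hco m) ?_
          intro n hn
          simp only [Set.mem_compl_iff, Set.mem_Iio, not_lt] at hn
          show c m * c n ∈ A
          rw [H m n hn]
          exact hcm
      have h4 : {m | {n | m * n ∈ A} ∈ Ultrafilter.map c V'} ∈ Ultrafilter.map c U' ↔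
          c ⁻¹' A ∈ U' := by
        rw [Ultrafilter.mem_map]
        constructor
        · exact fun hh => Filter.mem_of_superset hh fun m hm => (hiff m).mp hm
        · exact fun hh => Filter.mem_of_superset hh fun m hm => (hiff m).mpr hm
      exact h4
    refine ⟨Ultrafilter.map c U, Ultrafilter.map c V, key U U hU, key V V hV, ?_⟩
    rw [key U V hV, key V U hU]
    exact fun h => hUV (hmapinj h)
  · have key : ∀ U' V' : Ultrafilter ℕ, (↑V' : Filter ℕ) ≤ cofinite →
        Ultrafilter.map c U' * Ultrafilter.map c V' = Ultrafilter.map c V' := by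
      intro U' V' hV'
      have hco : ∀ m : ℕ, (Set.Iio m)ᶜ ∈ V' :=
        fun m => hV' (Set.Finite.compl_mem_cofinite (Set.finite_Iio m))
      ext A
      rw [mem_umul, Ultrafilter.mem_map]
      have hiff : ∀ m : ℕ, ({n | c m * n ∈ A} ∈ Ultrafilter.map c V') ↔ c ⁻¹' A ∈ V' := by
        intro m
        rw [Ultrafilter.mem_map]
        constructor
        · intro hmem
          refine (V'.mem_or_compl_mem (c ⁻¹' A)).resolve_right fun hcompl => ?_
          obtain ⟨n, ⟨hn1, hn2⟩, hn3⟩ :=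
            Ultrafilter.nonempty_of_mem (umem_inter (umem_inter hmem hcompl) (hco m))
          simp only [Set.mem_compl_iff, Set.mem_Iio, not_lt] at hn3
          have hn1' : c m * c n ∈ A := hn1
          rw [H m n hn3] at hn1'
          exact hn2 hn1'
        · intro hmem
          refine Filter.mem_of_superset (umem_inter hmem (hco m)) ?_
          rintro n ⟨hn1, hn2⟩
          simp only [Set.mem_compl_iff, Set.mem_Iio, not_lt] at hn2
          show c m * c n ∈ A
          rw [H m n hn2]
          exact hn1
      have h4 : {m | {n | m * n ∈ A} ∈ Ultrafilter.map c V'} ∈ Ultrafilter.map c U' ↔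
          c ⁻¹' A ∈ V' := by
        rw [Ultrafilter.mem_map]
        by_cases hA : c ⁻¹' A ∈ V'
        · simp only [hA, iff_true]
          exact Filter.mem_of_superset Filter.univ_mem fun m _ => (hiff m).mpr hA
        · simp only [hA, iff_false]
          intro hh
          obtain ⟨m, hm⟩ := Ultrafilter.nonempty_of_mem hh
          exact hA ((hiff m).mp hm)
      exact h4
    refine ⟨Ultrafilter.map c U, Ultrafilter.map c V, key U U hU, key V V hV, ?_⟩
    rw [key U V hV, key V U hU]
    exact fun h => hUV (hmapinj h.symm)

end Aux2

section Aux3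

open Filter

attribute [local instance] Ultrafilter.mul Ultrafilter.semigroup

variable {X : Type*} [Semigroup X]

theorem ppow_mul_ppow (x : X) (a b : ℕ) : ppow x a * ppow x b = ppow x (a + b + 1) := by
  induction b with
  | zero => rfl
  | succ b ih =>
    show ppow x a * (ppow x b * x) = _
    rw [← mul_assoc, ih]
    rfl

theorem ppow_finite_of_not_inj (x : X) (hni : ¬ Function.Injective (ppow x)) :
    {y : X | ∃ n : ℕ, y = ppow x n}.Finite := by
  have : ∃ k m : ℕ, k < m ∧ ppow x k = ppow x m := by
    simp only [Function.Injective, not_forall] at hni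
    obtain ⟨k, m, he, hne⟩ := hni
    rcases Nat.lt_or_ge k m with h | h
    · exact ⟨k, m, h, he⟩
    · exact ⟨m, k, lt_of_le_of_ne h (Ne.symm hne), he.symm⟩
  obtain ⟨k, m, hkm, he⟩ := this
  have key : ∀ n : ℕ, ∃ j ≤ m, ppow x n = ppow x j := by
    intro n
    induction n with
    | zero => exact ⟨0, Nat.zero_le m, rfl⟩
    | succ n ih =>
      obtain ⟨j, hj, hn⟩ := ih
      rcases Nat.lt_or_ge j m with h | h
      · exact ⟨j + 1, h, by show ppow x n * x = ppow x j * x; rw [hn]⟩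
      · have hjm : j = m := le_antisymm hj h
        refine ⟨k + 1, hkm, ?_⟩
        show ppow x n * x = ppow x k * x
        rw [hn, hjm, ← he]
  apply Set.Finite.subset ((Set.finite_Iic m).image (ppow x))
  rintro y ⟨n, rfl⟩
  obtain ⟨j, hj, hn⟩ := key n
  exact ⟨j, hj, hn.symm⟩

/-- Exponent sets with arbitrarily long runs, disjoint for `j = 0, 1`. -/
def expSet (j : ℕ) : Set ℕ := ⋃ i : ℕ, Set.Icc (4 ^ (2 * i + j)) (4 ^ (2 * i + j) + (2 * i + j))

theorem expSet_runs (j K : ℕ) : ∃ a, Set.Icc a (a + K) ⊆ expSet j := by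
  refine ⟨4 ^ (2 * K + j), fun t ht => Set.mem_iUnion.mpr ⟨K, ?_⟩⟩
  simp only [Set.mem_Icc] at ht ⊢
  omega

theorem four_interval_lt {n p : ℕ} (h : n < p) : 4 ^ n + n < 4 ^ p := by
  have h1 : n < 4 ^ n := Nat.lt_pow_self (by norm_num)
  have h2 : 4 ^ (n + 1) ≤ 4 ^ p := Nat.pow_le_pow_right (by norm_num) h
  have h3 : 4 ^ (n + 1) = 4 * 4 ^ n := by ring
  omega

theorem expSet_disjoint : expSet 0 ∩ expSet 1 = ∅ := by
  ext t
  simp only [Set.mem_inter_iff, Set.mem_empty_iff_false, iff_false, expSet, Set.mem_iUnion,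
    Set.mem_Icc]
  rintro ⟨⟨i, hi⟩, ⟨i', hi'⟩⟩
  rcases Nat.lt_or_ge (2 * i + 0) (2 * i' + 1) with h | h
  · have := four_interval_lt h
    omega
  · have h' : 2 * i' + 1 < 2 * i + 0 := by omega
    have := four_interval_lt h'
    omega

section Ideals

variable (x : X)

/-- The base set of the ideal `I j`. -/
def idealBase (j : ℕ) : Set X := ppow x '' expSet j

/-- Shifted base sets. -/
def idealShift (j k : ℕ) : Set X := {b | ppow x k * b ∈ idealBase x j}

/-- The closed left ideal `I j` of `Ultrafilter X`. -/
def idealI (j : ℕ) : Set (Ultrafilter X) :=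
  {p | idealBase x j ∈ p ∧ ∀ k : ℕ, idealShift x j k ∈ p}

theorem idealI_nonempty (j : ℕ) : (idealI x j).Nonempty := by
  set S : Set (Set X) := insert (idealBase x j) (Set.range (idealShift x j)) with hS
  have hfip : ∀ t : Set (Set X), t.Finite → t ⊆ S → ∃ K : ℕ, ∀ s ∈ t, ∀ a : ℕ,
      Set.Icc a (a + K) ⊆ expSet j → ppow x a ∈ s := by
    intro t htfin
    refine Set.Finite.induction_on
      (motive := fun t _ => t ⊆ S → ∃ K : ℕ, ∀ s ∈ t, ∀ a : ℕ,
        Set.Icc a (a + K) ⊆ expSet j → ppow x a ∈ s)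
      t htfin (fun _ => ⟨0, by simp⟩) ?_
    clear htfin t
    intro s t hs htfin ih hts
    obtain ⟨K, hK⟩ := ih (fun u hu => hts (Set.mem_insert_of_mem s hu))
    rcases hts (Set.mem_insert s t) with hB | ⟨k, rfl⟩
    · refine ⟨K, ?_⟩
      rintro u (rfl | hu) a ha
      · rw [hB]
        exact ⟨a, ha ⟨le_refl a, Nat.le_add_right a K⟩, rfl⟩
      · exact hK u hu a ha
    · refine ⟨max K (k + 1), ?_⟩
      rintro u (rfl | hu) a ha
      · show ppow x k * ppow x a ∈ idealBase x j
        rw [ppow_mul_ppow]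
        exact ⟨k + a + 1, ha ⟨by omega, by omega⟩, rfl⟩
      · exact hK u hu a fun t' ht' => ha ⟨ht'.1, le_trans ht'.2 (by omega)⟩
  have hne : (Filter.generate S).NeBot := by
    rw [Filter.generate_neBot_iff]
    intro t hts htfin
    obtain ⟨K, hK⟩ := hfip t htfin hts
    obtain ⟨a, ha⟩ := expSet_runs j K
    exact ⟨ppow x a, fun s hs => hK s hs a ha⟩
  refine ⟨Ultrafilter.of (Filter.generate S), ?_, fun k => ?_⟩
  · exact (Ultrafilter.of_le _) (Filter.mem_generate_of_mem (Set.mem_insert _ _))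
  · exact (Ultrafilter.of_le _)
      (Filter.mem_generate_of_mem (Set.mem_insert_of_mem _ ⟨k, rfl⟩))

theorem idealI_absorb {p q : Ultrafilter X} (j : ℕ) (hp : Set.range (ppow x) ∈ p)
    (hq : q ∈ idealI x j) : p * q ∈ idealI x j := by
  constructor
  · rw [mem_umul]
    refine Filter.mem_of_superset hp ?_
    rintro m ⟨l, rfl⟩
    show {n | ppow x l * n ∈ idealBase x j} ∈ q
    exact hq.2 l
  · intro k
    rw [mem_umul]
    refine Filter.mem_of_superset hp ?_
    rintro m ⟨l, rfl⟩
    show {n | ppow x l * n ∈ idealShift x j k} ∈ q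
    have : {n | ppow x l * n ∈ idealShift x j k} = idealShift x j (k + l + 1) := by
      ext n
      show ppow x k * (ppow x l * n) ∈ idealBase x j ↔ ppow x (k + l + 1) * n ∈ idealBase x j
      rw [← mul_assoc, ppow_mul_ppow]
    rw [this]
    exact hq.2 (k + l + 1)

theorem idealI_range_mem {p : Ultrafilter X} {j : ℕ} (hp : p ∈ idealI x j) :
    Set.range (ppow x) ∈ p :=
  Filter.mem_of_superset hp.1 (by rintro y ⟨n, _, rfl⟩; exact ⟨n, rfl⟩)

theorem idealI_isClosed (j : ℕ) : IsClosed (idealI x j) := by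
  have : idealI x j = {p : Ultrafilter X | idealBase x j ∈ p} ∩
      ⋂ k : ℕ, {p : Ultrafilter X | idealShift x j k ∈ p} := by
    ext p
    simp [idealI, Set.mem_iInter]
  rw [this]
  exact (ultrafilter_isClosed_basic _).inter (isClosed_iInter fun k =>
    ultrafilter_isClosed_basic _)

/-- The key construction: if `ppow x` is injective, `Ultrafilter X` contains
two non-commuting idempotents. -/
theorem cyclic_noncomm_idem (hinj : Function.Injective (ppow x)) :
    ∃ p q : Ultrafilter X, p * p = p ∧ q * q = q ∧ p * q ≠ q * p := by
  have hidem : ∀ j : ℕ, ∃ p ∈ idealI x j, p * p = p := by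
    intro j
    exact exists_idempotent_in_compact_subsemigroup Ultrafilter.continuous_mul_left
      (idealI x j) (idealI_nonempty x j) ((idealI_isClosed x j).isCompact)
      (fun p hp q hq => idealI_absorb x j (idealI_range_mem x hp) hq)
  obtain ⟨p, hp, hpidem⟩ := hidem 0
  obtain ⟨q, hq, hqidem⟩ := hidem 1
  refine ⟨p, q, hpidem, hqidem, fun hcomm => ?_⟩
  have h1 : p * q ∈ idealI x 1 := idealI_absorb x 1 (idealI_range_mem x hp) hq
  have h2 : q * p ∈ idealI x 0 := idealI_absorb x 0 (idealI_range_mem x hq) hp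
  rw [hcomm] at h1
  have hint := umem_inter h1.1 h2.1
  have hdisj : idealBase x 1 ∩ idealBase x 0 = ∅ := by
    ext y
    simp only [Set.mem_inter_iff, Set.mem_empty_iff_false, iff_false, idealBase]
    rintro ⟨⟨a, ha, rfl⟩, ⟨b, hb, hab⟩⟩
    have : b = a := hinj hab
    subst this
    exact absurd (Set.mem_inter hb ha)
      (by rw [expSet_disjoint]; exact fun h => h)
  rw [hdisj] at hint
  exact (Ultrafilter.nonempty_of_mem hint).ne_empty rfl

end Ideals

end Aux3

section Main

open Filter

attribute [local instance] Ultrafilter.mul Ultrafilter.semigroup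

variable {X : Type*} [Semigroup X]

theorem pure_umul (a b : X) : (pure a : Ultrafilter X) * pure b = pure (a * b) := by
  ext A
  rw [mem_umul]
  simp

theorem pure_uinj {a b : X} (hab : (pure a : Ultrafilter X) = pure b) : a = b := by
  have h1 : ({a} : Set X) ∈ (pure a : Ultrafilter X) := by simp
  rw [hab] at h1
  simpa using h1.symm

end Main

section Final

attribute [local instance] Ultrafilter.mul Ultrafilter.semigroup

/-- Proposition 2.1: if all idempotents of the Stone-Čech extension `β(X)` of a
semigroup `X` commute, then all cyclic subsemigroups `{xⁿ : n ∈ ℕ}` and all linear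
subsemigroups of `X` are finite. -/
theorem cyclic_and_linear_subsemigroups_finite {X : Type*} [Semigroup X]
    (h : ∀ F ∈ betaS X, ∀ G ∈ betaS X, F * F = F → G * G = G → F * G = G * F) :
    (∀ x : X, {y : X | ∃ n : ℕ, y = ppow x n}.Finite) ∧
      ∀ Z : Set X, (∀ a ∈ Z, ∀ b ∈ Z, a * b ∈ Z) →
        (∀ a ∈ Z, ∀ b ∈ Z, a * b = a ∨ a * b = b) → Z.Finite := by
  classical
  have hcomm := ultra_idem_comm h
  constructor
  · intro x
    by_cases hinj : Function.Injective (ppow x)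
    · exfalso
      obtain ⟨p, q, hp, hq, hne⟩ := cyclic_noncomm_idem x hinj
      exact hne (hcomm p q hp hq)
    · exact ppow_finite_of_not_inj x hinj
  · intro Z hcl hlin
    by_contra hfin
    have hZinf : Z.Infinite := hfin
    have hidem : ∀ a ∈ Z, a * a = a := fun a ha => by
      rcases hlin a ha a ha with h1 | h1 <;> exact h1
    have hZcomm : ∀ a ∈ Z, ∀ b ∈ Z, a * b = b * a := by
      intro a ha b hb
      have hpa : (pure a : Ultrafilter X) * pure a = pure a := by
        rw [pure_umul, hidem a ha]
      have hpb : (pure b : Ultrafilter X) * pure b = pure b := by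
        rw [pure_umul, hidem b hb]
      have hc := hcomm _ _ hpa hpb
      rw [pure_umul, pure_umul] at hc
      exact pure_uinj hc
    let f : ℕ ↪ ↥Z := hZinf.natEmbedding
    let r : ↥Z → ↥Z → Prop := fun a b => (a : X) * (b : X) = (a : X) ∧ a ≠ b
    haveI : IsTrans ↥Z r := by
      constructor
      rintro a b d ⟨h1, hne1⟩ ⟨h2, hne2⟩
      refine ⟨?_, ?_⟩
      · calc (a : X) * d = ((a : X) * b) * d := by rw [h1]
          _ = (a : X) * ((b : X) * d) := mul_assoc _ _ _
          _ = (a : X) * b := by rw [h2]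
          _ = a := h1
      · intro had
        apply hne1
        apply Subtype.coe_injective
        have h2' : (b : X) * a = b := by rw [had]; exact h2
        have := hZcomm a a.2 b b.2
        rw [h1, h2'] at this
        exact this
    obtain ⟨g, hg⟩ := exists_increasing_or_nonincreasing_subseq r (fun n => f n)
    let c : ℕ → X := fun n => (f (g n) : X)
    have hcmem : ∀ n, c n ∈ Z := fun n => (f (g n)).2
    have hcinj : Function.Injective c := fun m n hmn =>
      g.injective (f.injective (Subtype.coe_injective hmn))
    have H : (∀ m n, m ≤ n → c m * c n = c m) ∨ (∀ m n, m ≤ n → c m * c n = c n) := by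
      rcases hg with hg | hg
      · left
        intro m n hmn
        rcases Nat.lt_or_ge m n with hlt | hge
        · exact (hg m n hlt).1
        · have : m = n := le_antisymm hmn hge
          subst this
          exact hidem _ (hcmem m)
      · right
        intro m n hmn
        rcases Nat.lt_or_ge m n with hlt | hge
        · have hne : f (g m) ≠ f (g n) := fun e => absurd (g.injective (f.injective e)) (by omega)
          have hnr := hg m n hlt
          simp only [r, not_and, ne_eq] at hnr
          rcases hlin (c m) (hcmem m) (c n) (hcmem n) with h1 | h1
          · exact absurd hne (by simpa using hnr h1)
          · exact h1
        · have : m = n := le_antisymm hmn hge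
          subst this
          exact hidem _ (hcmem m)
    obtain ⟨p, q, hp, hq, hne⟩ := chain_noncomm_idem c hcinj H
    exact hne (hcomm p q hp hq)

end Final
end

section
/- Let X be a semigroup. An element x ∈ X is regular in X (that is, x ∈ xXx) if and only if the principal ultrafilter ⟨x⟩ = {A ⊆ X : x ∈ A} is a regular element of the semigroup υ(X). -/
open Set

lemma principal_mul_principal {X : Type*} [Semigroup X] (x y : X) :
    Upfamily.principal x * Upfamily.principal y = Upfamily.principal (x * y) := by
  apply Subtype.ext
  ext C
  constructor
  · rintro ⟨A, hA, B, hB, hsub⟩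
    exact hsub (Set.mem_biUnion hA ⟨y, hB x hA, rfl⟩)
  · intro hC
    refine ⟨{x}, rfl, fun _ => {y}, fun a _ => rfl, ?_⟩
    rintro z hz
    simp only [Set.mem_iUnion, Set.mem_image, Set.mem_singleton_iff] at hz
    obtain ⟨a, rfl, w, rfl, rfl⟩ := hz
    exact hC

/-- Proposition 3.1: an element `x` of a semigroup `X` is regular in `X`
if and only if the principal ultrafilter `⟨x⟩` is regular in `υ(X)`. -/
theorem regular_iff_principal_regular {X : Type*} [Semigroup X] (x : X) :
    (∃ y : X, x * y * x = x) ↔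
      ∃ G : Upfamily X,
        Upfamily.principal x * G * Upfamily.principal x = Upfamily.principal x := by
  constructor
  · rintro ⟨y, hy⟩
    exact ⟨Upfamily.principal y, by
      rw [principal_mul_principal, principal_mul_principal, hy]⟩
  · rintro ⟨G, hG⟩
    have hx : ({x} : Set X) ∈ (Upfamily.principal x * G * Upfamily.principal x).1 := by
      rw [hG]; exact rfl
    obtain ⟨A, hA, B, hB, hsub⟩ := hx
    obtain ⟨A', hA', B', hB', hsub'⟩ := hA
    obtain ⟨b, hb⟩ := G.2.2.1 (B' x) (hB' x hA')
    have hxbA : x * b ∈ A := hsub' (Set.mem_biUnion hA' ⟨b, hb, rfl⟩)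
    have : (x * b) * x ∈ ({x} : Set X) :=
      hsub (Set.mem_biUnion hxbA ⟨x, hB _ hxbA, rfl⟩)
    exact ⟨b, this⟩
end

section
/- Let X be a semigroup and Z ⊆ X a subsemigroup whose complement X∖Z is an ideal in X (that is, X(X∖Z) ∪ (X∖Z)X ⊆ X∖Z). If upfamilies 𝓐 ∈ υ(Z) ⊆ υ(X) and 𝓑 ∈ υ(X) satisfy 𝓐 = 𝓐*𝓑*𝓐, then 𝓐 = 𝓐*𝓑_Z*𝓐 for the upfamily 𝓑_Z = {B ∈ 𝓑 : B ⊆ Z} ∈ υ(Z). -/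
open Set

/-- Lemma 3.3: let `Z` be a subsemigroup of a semigroup `X` whose complement `X∖Z`
is an ideal in `X`.  An upfamily on `Z` is identified with the upfamily
`{A ⊆ X : A ∩ Z ∈ 𝓕}` on `X`, so that `𝓐 ∈ υ(Z) ⊆ υ(X)` means `∀ A ∈ 𝓐, A ∩ Z ∈ 𝓐`,
and the upfamily `𝓑_Z = {B ∈ 𝓑 : B ⊆ Z} ∈ υ(Z)` is identified with `{C : C ∩ Z ∈ 𝓑}`.
If `𝓐 = 𝓐*𝓑*𝓐`, then `𝓑_Z` is an upfamily belonging to `υ(Z)` and `𝓐 = 𝓐*𝓑_Z*𝓐`. -/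
theorem restrict_regularity_witness {X : Type*} [Semigroup X] (Z : Set X)
    (hZ : ∀ a ∈ Z, ∀ b ∈ Z, a * b ∈ Z)
    (hideal : ∀ x y : X, x ∉ Z → x * y ∉ Z ∧ y * x ∉ Z)
    (A B : Upfamily X) (hA : ∀ S ∈ A.1, S ∩ Z ∈ A.1)
    (h : A = A * B * A) :
    IsUpfamily {C : Set X | C ∩ Z ∈ B.1} ∧
      (∀ C ∈ {C : Set X | C ∩ Z ∈ B.1}, C ∩ Z ∈ {C : Set X | C ∩ Z ∈ B.1}) ∧
      A.1 = upMul (upMul A.1 {C : Set X | C ∩ Z ∈ B.1}) A.1 := by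
  have h' : A.1 = upMul (upMul A.1 B.1) A.1 := congrArg Subtype.val h
  set BZ : Set (Set X) := {C : Set X | C ∩ Z ∈ B.1} with hBZ
  -- key: every member of A is in upMul (upMul A BZ) A
  have key : ∀ T ∈ A.1, ∃ A₁ ∈ upMul A.1 BZ, ∃ Cf : X → Set X,
      (∀ a ∈ A₁, Cf a ∈ A.1) ∧ (⋃ a ∈ A₁, (fun y => a * y) '' Cf a) ⊆ T := by
    intro T hT
    have hTZ : T ∩ Z ∈ A.1 := hA T hT
    rw [h'] at hTZ
    obtain ⟨A₁, hA₁, Cf, hCf, hsub⟩ := hTZ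
    obtain ⟨A₀, hA₀, Bf, hBf, hsub1⟩ := hA₁
    have hA₀Z : A₀ ∩ Z ∈ A.1 := hA A₀ hA₀
    -- claim: for a ∈ A₀ ∩ Z, Bf a ⊆ Z
    have hBfZ : ∀ a ∈ A₀ ∩ Z, Bf a ⊆ Z := by
      rintro a ⟨haA, haZ⟩ b hb
      by_contra hbZ
      have hab : a * b ∈ A₁ :=
        hsub1 (mem_biUnion haA ⟨b, hb, rfl⟩)
      have hCab : Cf (a * b) ∩ Z ∈ A.1 := hA _ (hCf _ hab)
      obtain ⟨c, hcC, hcZ⟩ := A.2.2.1 _ hCab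
      have : (a * b) * c ∈ T ∩ Z := hsub (mem_biUnion hab ⟨c, hcC, rfl⟩)
      exact ((hideal (a * b) c ((hideal b a hbZ).2)).1) this.2
    refine ⟨A₁, ⟨A₀ ∩ Z, hA₀Z, Bf, ?_, ?_⟩, Cf, hCf,
      hsub.trans inter_subset_left⟩
    · intro a ha
      have : Bf a ∩ Z = Bf a := inter_eq_left.mpr (hBfZ a ha)
      simpa [hBZ, this] using hBf a ha.1
    · refine (biUnion_subset_biUnion_left inter_subset_left).trans hsub1
  have hBZsubB : BZ ⊆ B.1 := fun C hC => B.2.2.2 _ hC _ inter_subset_left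
  obtain ⟨T0, hT0⟩ := A.2.1
  obtain ⟨A₁, ⟨A₀, hA₀, Bf, hBf, -⟩, -⟩ := key T0 hT0
  obtain ⟨a0, ha0⟩ := A.2.2.1 _ hA₀
  refine ⟨⟨⟨Bf a0, hBf a0 ha0⟩, fun C hC => ?_, fun C hC D hCD => ?_⟩, ?_, ?_⟩
  · obtain ⟨x, hx, -⟩ := B.2.2.1 _ hC
    exact ⟨x, hx⟩
  · exact B.2.2.2 _ hC _ (inter_subset_inter_left _ hCD)
  · intro C hC
    simpa [hBZ, inter_assoc] using hC
  · apply Set.Subset.antisymm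
    · intro T hT
      obtain ⟨A₁, hA₁, Cf, hCf, hs⟩ := key T hT
      exact ⟨A₁, hA₁, Cf, hCf, hs⟩
    · rintro T ⟨A₁, ⟨A₀, hA₀, Bf, hBf, h1⟩, Cf, hCf, h2⟩
      rw [h']
      exact ⟨A₁, ⟨A₀, hA₀, Bf, fun a ha => hBZsubB (hBf a ha), h1⟩, Cf, hCf, h2⟩
end

section
/- Let X be a semigroup, Z ⊆ X a subsemigroup whose complement X∖Z is an ideal in X, and let S be one of the semigroups β(X), λ(X), φ(X), N₂(X), υ(X). If the semigroup S is regular, then the semigroup S ∩ υ(Z) is regular. -/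
open Set

section Aux

variable {X : Type*} [Mul X]

lemma upMul_mono_left {F F' G : Set (Set X)} (h : F ⊆ F') : upMul F G ⊆ upMul F' G := by
  rintro C ⟨A, hA, B, hB, hsub⟩
  exact ⟨A, h hA, B, hB, hsub⟩

lemma upMul_mono_right {F G G' : Set (Set X)} (h : G ⊆ G') : upMul F G ⊆ upMul F G' := by
  rintro C ⟨A, hA, B, hB, hsub⟩
  exact ⟨A, hA, B, fun a ha => h (hB a ha), hsub⟩

lemma linked_upMul' {F G : Set (Set X)}
    (hF : ∀ A ∈ F, ∀ B ∈ F, (A ∩ B).Nonempty)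
    (hG : ∀ A ∈ G, ∀ B ∈ G, (A ∩ B).Nonempty) :
    ∀ A ∈ upMul F G, ∀ B ∈ upMul F G, (A ∩ B).Nonempty := by
  rintro D₁ ⟨A₁, hA₁, B₁, hB₁, hsub₁⟩ D₂ ⟨A₂, hA₂, B₂, hB₂, hsub₂⟩
  obtain ⟨a, ha₁, ha₂⟩ := hF A₁ hA₁ A₂ hA₂
  obtain ⟨b, hb₁, hb₂⟩ := hG (B₁ a) (hB₁ a ha₁) (B₂ a) (hB₂ a ha₂)
  exact ⟨a * b, hsub₁ (Set.mem_biUnion ha₁ ⟨b, hb₁, rfl⟩),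
    hsub₂ (Set.mem_biUnion ha₂ ⟨b, hb₂, rfl⟩)⟩

end Aux

/-- Corollary 3.4: let `Z` be a subsemigroup of a semigroup `X` whose complement
`X∖Z` is an ideal in `X`, and let `S` be one of the extensions
`β(X)`, `λ(X)`, `φ(X)`, `N₂(X)`, `υ(X)`.  An upfamily `F ∈ S` belongs to
(the canonical copy of) `υ(Z)` iff `∀ A ∈ F, A ∩ Z ∈ F`.  If `S` is regular, then
the semigroup `S ∩ υ(Z)` is regular. -/
theorem extension_regular_restricts {X : Type*} [Semigroup X] (Z : Set X)
    (hZ : ∀ a ∈ Z, ∀ b ∈ Z, a * b ∈ Z)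
    (hideal : ∀ x y : X, x ∉ Z → x * y ∉ Z ∧ y * x ∉ Z)
    (S : Set (Upfamily X))
    (hS : S = betaS X ∨ S = lambdaS X ∨ S = phiS X ∨ S = N2S X ∨
      S = (univ : Set (Upfamily X)))
    (hreg : ∀ F ∈ S, ∃ G ∈ S, F * G * F = F) :
    ∀ F ∈ S, (∀ A ∈ F.1, A ∩ Z ∈ F.1) →
      ∃ G ∈ S, (∀ A ∈ G.1, A ∩ Z ∈ G.1) ∧ F * G * F = F := by
  intro F hF hFZ
  obtain ⟨G, hGS, hFGF⟩ := hreg F hF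
  -- the family of supersets of members of G that lie inside Z
  set GZ : Set (Set X) := {C | ∃ B, B ∈ G.1 ∧ B ⊆ Z ∧ B ⊆ C} with hGZdef
  have hFGF1 : upMul (upMul F.1 G.1) F.1 = F.1 := congrArg Subtype.val hFGF
  -- key decomposition: the Z-trace of any member of F is witnessed inside Z
  have hdec : ∀ A ∈ F.1, ∃ E ∈ upMul F.1 GZ, ∃ Cf : X → Set X,
      (∀ x ∈ E, Cf x ∈ F.1) ∧ (⋃ x ∈ E, (fun y => x * y) '' Cf x) ⊆ A ∩ Z := by
    intro A hA
    have hAZ : A ∩ Z ∈ upMul (upMul F.1 G.1) F.1 := by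
      rw [hFGF1]; exact hFZ A hA
    obtain ⟨E, hE, Cf, hCf, hsub⟩ := hAZ
    have hEZ : ∀ x ∈ E, x ∈ Z := by
      intro x hx
      obtain ⟨c, hc⟩ := F.2.2.1 _ (hCf x hx)
      by_contra hxZ
      exact (hideal x c hxZ).1 (hsub (Set.mem_biUnion hx ⟨c, hc, rfl⟩)).2
    obtain ⟨A₀, hA₀, B, hB, hsubE⟩ := hE
    have hBZ : ∀ a ∈ A₀, B a ⊆ Z := by
      intro a ha b hb
      by_contra hbZ
      exact (hideal b a hbZ).2 (hEZ _ (hsubE (Set.mem_biUnion ha ⟨b, hb, rfl⟩)))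
    exact ⟨E, ⟨A₀, hA₀, B, fun a ha => ⟨B a, hB a ha, hBZ a ha, subset_rfl⟩, hsubE⟩,
      Cf, hCf, hsub⟩
  -- G has a member inside Z
  have hB0 : ∃ B, B ∈ G.1 ∧ B ⊆ Z := by
    obtain ⟨A, hA⟩ := F.2.1
    obtain ⟨E, ⟨A₀, hA₀, B, hB, -⟩, -⟩ := hdec A hA
    obtain ⟨a, ha⟩ := F.2.2.1 A₀ hA₀
    obtain ⟨B', hB', hB'Z, -⟩ := hB a ha
    exact ⟨B', hB', hB'Z⟩
  obtain ⟨B₀, hB₀G, hB₀Z⟩ := hB0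
  have hGZup : IsUpfamily GZ := by
    refine ⟨⟨univ, B₀, hB₀G, hB₀Z, subset_univ _⟩, ?_, ?_⟩
    · rintro C ⟨B, hBG, -, hBC⟩
      exact (G.2.2.1 B hBG).mono hBC
    · rintro C ⟨B, hBG, hBZ, hBC⟩ D hCD
      exact ⟨B, hBG, hBZ, hBC.trans hCD⟩
  set G' : Upfamily X := ⟨GZ, hGZup⟩ with hG'def
  have hG'Z : ∀ A ∈ G'.1, A ∩ Z ∈ G'.1 := by
    rintro C ⟨B, hBG, hBZ, hBC⟩
    exact ⟨B, hBG, hBZ, subset_inter hBC hBZ⟩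
  have hGZsubG : GZ ⊆ G.1 := by
    rintro C ⟨B, hBG, -, hBC⟩
    exact G.2.2.2 B hBG C hBC
  have hZGZ : Z ∈ GZ := ⟨B₀, hB₀G, hB₀Z, hB₀Z⟩
  -- lower bound, uniform in any H containing GZ
  have hlow : ∀ H : Upfamily X, GZ ⊆ H.1 → F.1 ⊆ (F * H * F).1 := by
    intro H hGH A hA
    obtain ⟨E, hE, Cf, hCf, hsub⟩ := hdec A hA
    have h2 : A ∩ Z ∈ upMul (upMul F.1 H.1) F.1 :=
      ⟨E, upMul_mono_right hGH hE, Cf, hCf, hsub⟩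
    exact (F * H * F).2.2.2 _ h2 A inter_subset_left
  -- upper bound for G'
  have hup : (F * G' * F).1 ⊆ F.1 := by
    intro D hD
    have : D ∈ upMul (upMul F.1 G.1) F.1 :=
      upMul_mono_left (upMul_mono_right hGZsubG) hD
    rwa [hFGF1] at this
  have hFG'F : F * G' * F = F := Subtype.ext (subset_antisymm hup (hlow G' subset_rfl))
  rcases hS with h | h | h | h | h <;> subst h
  · -- ultrafilters
    have hZG : Z ∈ G.1 := G.2.2.2 B₀ hB₀G Z hB₀Z
    exact ⟨G, hGS, fun A hA => hGS.1 A hA Z hZG, hFGF⟩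
  · -- maximal linked: Zorn construction
    have hGlink : G.Linked := hGS.1
    have hGZlink : ∀ A ∈ GZ, ∀ B ∈ GZ, (A ∩ B).Nonempty := by
      rintro C₁ ⟨B₁, hB₁, -, hC₁⟩ C₂ ⟨B₂, hB₂, -, hC₂⟩
      obtain ⟨x, hx₁, hx₂⟩ := hGlink B₁ hB₁ B₂ hB₂
      exact ⟨x, hC₁ hx₁, hC₂ hx₂⟩
    set P : Set (Set (Set X)) :=
      {H | IsUpfamily H ∧ (∀ A ∈ H, ∀ B ∈ H, (A ∩ B).Nonempty) ∧
        (∀ C ∈ H, C ∩ Z ∈ H) ∧ GZ ⊆ H} with hPdef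
    have hGZP : GZ ∈ P := ⟨hGZup, hGZlink, hG'Z, subset_rfl⟩
    have hchainub : ∀ c ⊆ P, IsChain (· ⊆ ·) c → c.Nonempty →
        ∃ ub ∈ P, ∀ s ∈ c, s ⊆ ub := by
      intro c hcP hchain hcne
      refine ⟨⋃₀ c, ⟨⟨?_, ?_, ?_⟩, ?_, ?_, ?_⟩, fun s hs => subset_sUnion_of_mem hs⟩
      · obtain ⟨H, hH⟩ := hcne
        obtain ⟨A, hA⟩ := (hcP hH).1.1
        exact ⟨A, H, hH, hA⟩
      · rintro A ⟨H, hH, hA⟩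
        exact (hcP hH).1.2.1 A hA
      · rintro A ⟨H, hH, hA⟩ B hAB
        exact ⟨H, hH, (hcP hH).1.2.2 A hA B hAB⟩
      · rintro A ⟨H₁, hH₁, hA⟩ B ⟨H₂, hH₂, hB⟩
        rcases hchain.total hH₁ hH₂ with hsub | hsub
        · exact (hcP hH₂).2.1 A (hsub hA) B hB
        · exact (hcP hH₁).2.1 A hA B (hsub hB)
      · rintro C ⟨H, hH, hC⟩
        exact ⟨H, hH, (hcP hH).2.2.1 C hC⟩
      · obtain ⟨H, hH⟩ := hcne
        exact ((hcP hH).2.2.2).trans (subset_sUnion_of_mem hH)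
    obtain ⟨Mset, hGZM, hMP, hMmax⟩ := zorn_subset_nonempty P hchainub GZ hGZP
    set M : Upfamily X := ⟨Mset, hMP.1⟩ with hMdef
    have hMlink : M.Linked := hMP.2.1
    have hMZprop : ∀ C ∈ Mset, C ∩ Z ∈ Mset := hMP.2.2.1
    have hZM : Z ∈ Mset := hGZM hZGZ
    have hMmaxLinked : M.IsMaxLinked := by
      refine ⟨hMlink, fun N hN hMN => ?_⟩
      have hNsubM : N.1 ⊆ Mset := by
        intro Sb hSb
        have hSZne : (Sb ∩ Z).Nonempty := hN Sb hSb Z (hMN hZM)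
        have hSZmeets : ∀ C ∈ Mset, ((Sb ∩ Z) ∩ C).Nonempty := by
          intro C hC
          obtain ⟨x, hxS, hxC, hxZ⟩ := hN Sb hSb (C ∩ Z) (hMN (hMZprop C hC))
          exact ⟨x, ⟨hxS, hxZ⟩, hxC⟩
        have hH'P : {D | D ∈ Mset ∨ Sb ∩ Z ⊆ D} ∈ P := by
          refine ⟨⟨⟨univ, Or.inr (subset_univ _)⟩, ?_, ?_⟩, ?_, ?_, ?_⟩
          · rintro A (hA | hA)
            · exact hMP.1.2.1 A hA
            · exact hSZne.mono hA
          · rintro A (hA | hA) B hAB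
            · exact Or.inl (hMP.1.2.2 A hA B hAB)
            · exact Or.inr (hA.trans hAB)
          · rintro A (hA | hA) B (hB | hB)
            · exact hMP.2.1 A hA B hB
            · obtain ⟨x, hx1, hx2⟩ := hSZmeets A hA
              exact ⟨x, hx2, hB hx1⟩
            · obtain ⟨x, hx1, hx2⟩ := hSZmeets B hB
              exact ⟨x, hA hx1, hx2⟩
            · exact hSZne.mono (subset_inter hA hB)
          · rintro C (hC | hC)
            · exact Or.inl (hMZprop C hC)
            · exact Or.inr (subset_inter hC inter_subset_right)
          · exact fun C hC => Or.inl (hGZM hC)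
        have hsub := hMmax hH'P (fun D hD => Or.inl hD)
        have hSZM : Sb ∩ Z ∈ Mset := hsub (Or.inr subset_rfl)
        exact hMP.1.2.2 _ hSZM Sb inter_subset_left
      exact Subtype.ext (subset_antisymm hMN hNsubM)
    have hFMFlink : (F * M * F).Linked := by
      have h1 : ∀ A ∈ (F * M).1, ∀ B ∈ (F * M).1, (A ∩ B).Nonempty :=
        linked_upMul' hF.1 hMlink
      exact linked_upMul' h1 hF.1
    have hFMF : F = F * M * F := hF.2 (F * M * F) hFMFlink (hlow M hGZM)
    exact ⟨M, hMmaxLinked, hMZprop, hFMF.symm⟩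
  · -- filters
    refine ⟨G', ?_, hG'Z, hFG'F⟩
    rintro C₁ ⟨B₁, hB₁, hB₁Z, hC₁⟩ C₂ ⟨B₂, hB₂, hB₂Z, hC₂⟩
    exact ⟨B₁ ∩ B₂, hGS B₁ hB₁ B₂ hB₂, (inter_subset_left).trans hB₁Z,
      fun x hx => ⟨hC₁ hx.1, hC₂ hx.2⟩⟩
  · -- linked upfamilies
    refine ⟨G', ?_, hG'Z, hFG'F⟩
    rintro C₁ ⟨B₁, hB₁, -, hC₁⟩ C₂ ⟨B₂, hB₂, -, hC₂⟩
    obtain ⟨x, hx₁, hx₂⟩ := hGS B₁ hB₁ B₂ hB₂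
    exact ⟨x, hC₁ hx₁, hC₂ hx₂⟩
  · exact ⟨G', trivial, hG'Z, hFG'F⟩
end

section
/- The superextension λ(C₃) of the cyclic group C₃ of order 3 is isomorphic to the semigroup L₁⊔C₃. -/
open Set

section C3Proof

local notation "X3" => Cgrp 3

/-- The "triangle" maximal linked family: all subsets with at least two elements. -/
def Delta3 : Upfamily X3 := by
  refine ⟨{A | ∃ a ∈ A, ∃ b ∈ A, a ≠ b}, ⟨univ, ?_⟩, ?_, ?_⟩
  · exact ⟨Multiplicative.ofAdd 0, trivial, Multiplicative.ofAdd 1, trivial, by decide⟩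
  · rintro A ⟨a, ha, -⟩; exact ⟨a, ha⟩
  · rintro A ⟨a, ha, b, hb, hab⟩ B hAB; exact ⟨a, hAB ha, b, hAB hb, hab⟩

lemma mem_Delta3 {A : Set X3} : A ∈ Delta3.1 ↔ ∃ a ∈ A, ∃ b ∈ A, a ≠ b := Iff.rfl

lemma mem_principal {x : X3} {A : Set X3} : A ∈ (Upfamily.principal x).1 ↔ x ∈ A := Iff.rfl

lemma mem_mulUp {F G : Upfamily X3} {C : Set X3} :
    C ∈ (F * G).1 ↔ C ∈ upMul F.1 G.1 := Iff.rfl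

/-- Two subsets of a 3-element set, each with ≥ 2 elements, intersect. -/
lemma linked3 {A B : Set X3} (hA : ∃ a ∈ A, ∃ b ∈ A, a ≠ b)
    (hB : ∃ a ∈ B, ∃ b ∈ B, a ≠ b) : (A ∩ B).Nonempty := by
  obtain ⟨a, ha, b, hb, hab⟩ := hA
  obtain ⟨c, hc, d, hd, hcd⟩ := hB
  by_contra h
  rw [Set.not_nonempty_iff_eq_empty] at h
  have hnot : ∀ x, x ∉ A ∩ B := fun x hx => by rw [h] at hx; exact hx
  have hac : a ≠ c := fun e => hnot a ⟨ha, e ▸ hc⟩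
  have had : a ≠ d := fun e => hnot a ⟨ha, e ▸ hd⟩
  have hbc : b ≠ c := fun e => hnot b ⟨hb, e ▸ hc⟩
  have hbd : b ≠ d := fun e => hnot b ⟨hb, e ▸ hd⟩
  have key : ∀ a b c d : Cgrp 3, a ≠ b → c ≠ d → a ≠ c → a ≠ d → b ≠ c → b ≠ d → False := by
    decide
  exact key a b c d hab hcd hac had hbc hbd

/-- A maximal linked family contains any set meeting all its members. -/
lemma mem_of_meets {F : Upfamily X3} (hF : F.IsMaxLinked) {A : Set X3}
    (hA : ∀ B ∈ F.1, (A ∩ B).Nonempty) : A ∈ F.1 := by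
  obtain ⟨B0, hB0⟩ := F.2.1
  have hAne : A.Nonempty := by
    obtain ⟨x, hx, -⟩ := hA B0 hB0; exact ⟨x, hx⟩
  have hG : IsUpfamily (F.1 ∪ {B | A ⊆ B}) := by
    refine ⟨⟨B0, Or.inl hB0⟩, ?_, ?_⟩
    · rintro C (hC | hC)
      · exact F.2.2.1 C hC
      · exact hAne.mono hC
    · rintro C (hC | hC) D hCD
      · exact Or.inl (F.2.2.2 C hC D hCD)
      · exact Or.inr (hC.trans hCD)
  have hGl : Upfamily.Linked ⟨_, hG⟩ := by
    rintro C (hC | hC) D (hD | hD)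
    · exact hF.1 C hC D hD
    · obtain ⟨x, hxA, hxC⟩ := hA C hC
      exact ⟨x, hxC, hD hxA⟩
    · exact (hA D hD).mono (Set.inter_subset_inter_left D hC)
    · exact hAne.mono (Set.subset_inter hC hD)
  have := hF.2 ⟨_, hG⟩ hGl Set.subset_union_left
  rw [this]
  exact Or.inr (le_refl A)

lemma Delta3_maxLinked : Delta3.IsMaxLinked := by
  constructor
  · intro A hA B hB; exact linked3 hA hB
  · intro G hG hsub
    apply Subtype.ext
    apply Set.Subset.antisymm hsub
    intro B hB
    obtain ⟨x, hx⟩ := G.2.2.1 B hB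
    rw [mem_Delta3]
    by_contra hB2
    push_neg at hB2
    have hBx : ∀ y ∈ B, y = x := fun y hy => hB2 y hy x hx
    have key2 : ∀ z : Cgrp 3, ∃ a b : Cgrp 3, a ≠ z ∧ b ≠ z ∧ a ≠ b := by decide
    obtain ⟨a, b, hax, hbx, hab⟩ := key2 x
    have hC : ({a, b} : Set X3) ∈ G.1 := hsub ⟨a, by simp, b, by simp, hab⟩
    obtain ⟨y, hyB, hyC⟩ := hG B hB _ hC
    have := hBx y hyB
    rcases hyC with h | h
    · exact hax (by rw [← h, this])
    · exact hbx (by rw [← h, this])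

lemma principal_maxLinked (x : X3) : (Upfamily.principal x).IsMaxLinked := by
  constructor
  · intro A hA B hB; exact ⟨x, hA, hB⟩
  · intro G hG hsub
    apply Subtype.ext
    apply Set.Subset.antisymm hsub
    intro B hB
    have hx : ({x} : Set X3) ∈ G.1 := hsub (by simp [mem_principal])
    obtain ⟨y, hyB, hy⟩ := hG B hB _ hx
    rw [Set.mem_singleton_iff] at hy
    exact show x ∈ B from hy ▸ hyB

lemma principal_mul (g h : X3) :
    Upfamily.principal g * Upfamily.principal h = Upfamily.principal (g * h) := by
  apply Subtype.ext
  ext C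
  constructor
  · rintro ⟨A, hA, B, hB, hsub⟩
    exact hsub (Set.mem_biUnion hA ⟨h, hB g hA, rfl⟩)
  · intro hC
    refine ⟨{g}, rfl, fun _ => {h}, fun a _ => rfl, ?_⟩
    rintro y hy
    simp only [Set.mem_iUnion, Set.mem_image, Set.mem_singleton_iff] at hy
    obtain ⟨a, rfl, b, rfl, rfl⟩ := hy
    exact hC

lemma Delta3_mul_Delta3 : Delta3 * Delta3 = Delta3 := by
  apply Subtype.ext
  ext C
  constructor
  · rintro ⟨A, hA, B, hB, hsub⟩
    obtain ⟨a, ha, -⟩ := hA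
    obtain ⟨b1, hb1, b2, hb2, hb⟩ := hB a ha
    refine ⟨a * b1, hsub (Set.mem_biUnion ha ⟨b1, hb1, rfl⟩),
      a * b2, hsub (Set.mem_biUnion ha ⟨b2, hb2, rfl⟩), fun e => hb ?_⟩
    exact mul_left_cancel e
  · rintro ⟨c1, hc1, c2, hc2, hc⟩
    refine ⟨univ, ⟨Multiplicative.ofAdd 0, trivial, Multiplicative.ofAdd 1, trivial, by decide⟩,
      fun a => {a⁻¹ * c1, a⁻¹ * c2}, fun a _ => ⟨a⁻¹ * c1, by simp, a⁻¹ * c2, by simp,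
        fun e => hc (mul_left_cancel e)⟩, ?_⟩
    rintro y hy
    simp only [Set.mem_iUnion, Set.mem_image, Set.mem_insert_iff, Set.mem_singleton_iff] at hy
    obtain ⟨a, -, b, (rfl | rfl), rfl⟩ := hy
    · simpa using hc1
    · simpa using hc2

lemma Delta3_mul_principal (g : X3) : Delta3 * Upfamily.principal g = Delta3 := by
  apply Subtype.ext
  ext C
  constructor
  · rintro ⟨A, hA, B, hB, hsub⟩
    obtain ⟨a1, ha1, a2, ha2, ha⟩ := hA
    refine ⟨a1 * g, hsub (Set.mem_biUnion ha1 ⟨g, hB a1 ha1, rfl⟩),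
      a2 * g, hsub (Set.mem_biUnion ha2 ⟨g, hB a2 ha2, rfl⟩), fun e => ha ?_⟩
    exact mul_right_cancel e
  · rintro ⟨c1, hc1, c2, hc2, hc⟩
    refine ⟨{c1 * g⁻¹, c2 * g⁻¹},
      ⟨c1 * g⁻¹, by simp, c2 * g⁻¹, by simp, fun e => hc (mul_right_cancel e)⟩,
      fun _ => {g}, fun a _ => rfl, ?_⟩
    rintro y hy
    simp only [Set.mem_iUnion, Set.mem_image, Set.mem_insert_iff, Set.mem_singleton_iff] at hy
    obtain ⟨a, (rfl | rfl), b, rfl, rfl⟩ := hy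
    · simpa using hc1
    · simpa using hc2

lemma principal_mul_Delta3 (g : X3) : Upfamily.principal g * Delta3 = Delta3 := by
  apply Subtype.ext
  ext C
  constructor
  · rintro ⟨A, hA, B, hB, hsub⟩
    obtain ⟨b1, hb1, b2, hb2, hb⟩ := hB g hA
    refine ⟨g * b1, hsub (Set.mem_biUnion hA ⟨b1, hb1, rfl⟩),
      g * b2, hsub (Set.mem_biUnion hA ⟨b2, hb2, rfl⟩), fun e => hb ?_⟩
    exact mul_left_cancel e
  · rintro ⟨c1, hc1, c2, hc2, hc⟩
    refine ⟨{g}, rfl, fun _ => {g⁻¹ * c1, g⁻¹ * c2},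
      fun a _ => ⟨g⁻¹ * c1, by simp, g⁻¹ * c2, by simp, fun e => hc (mul_left_cancel e)⟩, ?_⟩
    rintro y hy
    simp only [Set.mem_iUnion, Set.mem_image, Set.mem_insert_iff, Set.mem_singleton_iff] at hy
    obtain ⟨a, rfl, b, (rfl | rfl), rfl⟩ := hy
    · simpa using hc1
    · simpa using hc2

end C3Proof

/-- Proposition 4.1(2): `λ(C₃) ≅ L₁ ⊔ C₃`. -/
theorem superextension_C3 : MulIsoOnto (OSum (L 1) (Cgrp 3)) (lambdaS (Cgrp 3)) := by
  refine ⟨Sum.elim (fun _ => Delta3) (fun g => Upfamily.principal g), ?_, ?_, ?_⟩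
  · rintro (a | g) (b | h) hfe
    · exact congrArg Sum.inl (Subsingleton.elim (α := Fin 1) a b)
    · exfalso
      have hm : ({h} : Set (Cgrp 3)) ∈ Delta3.1 := by
        rw [show Delta3 = Upfamily.principal h from hfe]
        exact rfl
      obtain ⟨x, hx, y, hy, hxy⟩ := hm
      rw [Set.mem_singleton_iff] at hx hy
      exact hxy (hx.trans hy.symm)
    · exfalso
      have hm : ({g} : Set (Cgrp 3)) ∈ Delta3.1 := by
        rw [← show Upfamily.principal g = Delta3 from hfe]
        exact rfl
      obtain ⟨x, hx, y, hy, hxy⟩ := hm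
      rw [Set.mem_singleton_iff] at hx hy
      exact hxy (hx.trans hy.symm)
    · have : g ∈ ({h} : Set (Cgrp 3)) := by
        have : ({h} : Set (Cgrp 3)) ∈ (Upfamily.principal g).1 := by
          rw [show Upfamily.principal g = Upfamily.principal h from hfe]
          exact rfl
        exact this
      rw [Set.mem_singleton_iff] at this
      exact congrArg Sum.inr this
  · ext F
    simp only [Set.mem_range]
    constructor
    · rintro ⟨(a | g), rfl⟩
      · exact Delta3_maxLinked
      · exact principal_maxLinked g
    · intro hF
      by_cases h : ∃ x : Cgrp 3, {x} ∈ F.1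
      · obtain ⟨x, hx⟩ := h
        refine ⟨Sum.inr x, ?_⟩
        apply Subtype.ext
        ext B
        constructor
        · intro hB
          exact F.2.2.2 {x} hx B (Set.singleton_subset_iff.mpr hB)
        · intro hB
          obtain ⟨y, hyB, hy⟩ := hF.1 B hB {x} hx
          rw [Set.mem_singleton_iff] at hy
          exact show x ∈ B from hy ▸ hyB
      · push_neg at h
        refine ⟨Sum.inl (show L 1 from ⟨0, Nat.one_pos⟩), ?_⟩
        have hsub : F.1 ⊆ Delta3.1 := by
          intro B hB
          by_contra hB2
          rw [mem_Delta3] at hB2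
          push_neg at hB2
          obtain ⟨x, hx⟩ := F.2.2.1 B hB
          have : B = {x} := Set.eq_singleton_iff_unique_mem.mpr ⟨hx, fun y hy => hB2 y hy x hx⟩
          exact h x (this ▸ hB)
        exact (hF.2 Delta3 Delta3_maxLinked.1 hsub).symm
  · rintro (a | g) (b | h)
    · exact Delta3_mul_Delta3.symm
    · exact (Delta3_mul_principal h).symm
    · exact (principal_mul_Delta3 g).symm
    · exact (principal_mul g h).symm
end

section
/- The superextension λ(C₄) of the cyclic group C₄ of order 4 is isomorphic to the semigroup (C₂⊔L₁)×C₄. -/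
open Set

section C4Proof

set_option maxRecDepth 100000
set_option maxHeartbeats 2000000

abbrev X4 := Cgrp 4

/-- element of `X4` from `ZMod 4`. -/
def el (i : ZMod 4) : X4 := Multiplicative.ofAdd i

/-- up-closure of a finite family of finsets -/
def up (S : Finset (Finset X4)) : Set (Set X4) := {A | ∃ s ∈ S, ↑s ⊆ A}

def good (S : Finset (Finset X4)) : Prop := S.Nonempty ∧ ∀ s ∈ S, s.Nonempty

lemma up_isUpfamily {S : Finset (Finset X4)} (h : good S) : IsUpfamily (up S) := by
  obtain ⟨⟨s0, hs0⟩, hne⟩ := h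
  refine ⟨⟨univ, s0, hs0, subset_univ _⟩, ?_, ?_⟩
  · rintro A ⟨s, hs, hsub⟩
    obtain ⟨a, ha⟩ := hne s hs
    exact ⟨a, hsub (Finset.mem_coe.mpr ha)⟩
  · rintro A ⟨s, hs, hsub⟩ B hAB
    exact ⟨s, hs, hsub.trans hAB⟩

def upF (S : Finset (Finset X4)) (h : good S) : Upfamily X4 := ⟨up S, up_isUpfamily h⟩

def genLE (S T : Finset (Finset X4)) : Prop := ∀ s ∈ S, ∃ t ∈ T, t ⊆ s

instance (S T : Finset (Finset X4)) : Decidable (genLE S T) :=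
  inferInstanceAs (Decidable (∀ s ∈ S, ∃ t ∈ T, t ⊆ s))

lemma up_subset (S T : Finset (Finset X4)) : up S ⊆ up T ↔ genLE S T := by
  constructor
  · intro h s hs
    obtain ⟨t, ht, hsub⟩ := h ⟨s, hs, Set.Subset.rfl⟩
    exact ⟨t, ht, Finset.coe_subset.mp hsub⟩
  · rintro h A ⟨s, hs, hsA⟩
    obtain ⟨t, ht, hts⟩ := h s hs
    exact ⟨t, ht, (Finset.coe_subset.mpr hts).trans hsA⟩

lemma up_eq {S T : Finset (Finset X4)} (h : genLE S T ∧ genLE T S) : up S = up T :=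
  Set.Subset.antisymm ((up_subset S T).mpr h.1) ((up_subset T S).mpr h.2)

def mins (S : Finset (Finset X4)) : Finset (Finset X4) :=
  S.filter fun s => ∀ t ∈ S, ¬ t ⊂ s

lemma exists_min (S : Finset (Finset X4)) :
    ∀ (n : ℕ) (s : Finset X4), s.card ≤ n → s ∈ S → ∃ t ∈ mins S, t ⊆ s := by
  intro n
  induction n with
  | zero =>
    intro s hcard hs
    refine ⟨s, Finset.mem_filter.mpr ⟨hs, fun t _ hts => ?_⟩, Finset.Subset.rfl⟩
    have := Finset.card_lt_card hts
    omega
  | succ n ih =>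
    intro s hcard hs
    by_cases h : ∀ t ∈ S, ¬ t ⊂ s
    · exact ⟨s, Finset.mem_filter.mpr ⟨hs, h⟩, Finset.Subset.rfl⟩
    · push_neg at h
      obtain ⟨t, htS, hts⟩ := h
      have := Finset.card_lt_card hts
      obtain ⟨u, hu, hut⟩ := ih t (by omega) htS
      exact ⟨u, hu, hut.trans hts.subset⟩

lemma up_mins (S : Finset (Finset X4)) : up S = up (mins S) := by
  apply Set.Subset.antisymm
  · rw [up_subset]
    intro s hs
    exact exists_min S s.card s le_rfl hs
  · rw [up_subset]
    intro s hs
    exact ⟨s, (Finset.mem_filter.mp hs).1, Finset.Subset.rfl⟩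

def mulGen (S T : Finset (Finset X4)) : Finset (Finset X4) :=
  S.biUnion fun s => (s.pi fun _ => T).image fun f =>
    s.attach.biUnion fun a => (f a.1 a.2).image (a.1 * ·)

lemma upMul_up {S T : Finset (Finset X4)} (hT : T.Nonempty) :
    upMul (up S) (up T) = up (mulGen S T) := by
  classical
  ext C
  constructor
  · rintro ⟨A, ⟨s, hs, hsA⟩, B, hB, hsub⟩
    choose t ht htsub using hB
    refine ⟨s.attach.biUnion fun a =>
      (t a.1 (hsA (Finset.mem_coe.mpr a.2))).image (a.1 * ·), ?_, ?_⟩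
    · refine Finset.mem_biUnion.mpr ⟨s, hs, Finset.mem_image.mpr
        ⟨fun a h => t a (hsA (Finset.mem_coe.mpr h)), ?_, rfl⟩⟩
      rw [Finset.mem_pi]
      intro a h
      exact ht a (hsA (Finset.mem_coe.mpr h))
    · intro x hx
      rw [Finset.mem_coe, Finset.mem_biUnion] at hx
      obtain ⟨a, -, hx⟩ := hx
      rw [Finset.mem_image] at hx
      obtain ⟨b, hb, rfl⟩ := hx
      have haA : (a : X4) ∈ A := hsA (Finset.mem_coe.mpr a.2)
      refine hsub (Set.mem_biUnion haA ⟨b, ?_, rfl⟩)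
      exact htsub a.1 haA (Finset.mem_coe.mpr hb)
  · rintro ⟨gs, hg, hgC⟩
    rw [mulGen, Finset.mem_biUnion] at hg
    obtain ⟨s, hs, hg⟩ := hg
    rw [Finset.mem_image] at hg
    obtain ⟨f, hf, rfl⟩ := hg
    rw [Finset.mem_pi] at hf
    obtain ⟨t0, ht0⟩ := hT
    refine ⟨↑s, ⟨s, hs, Set.Subset.rfl⟩,
      fun a => if h : a ∈ s then ↑(f a h) else ↑t0, fun a ha => ?_, ?_⟩
    · have h : a ∈ s := Finset.mem_coe.mp ha
      simp only [dif_pos h]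
      exact ⟨f a h, hf a h, Set.Subset.rfl⟩
    · intro x hx
      rw [Set.mem_iUnion₂] at hx
      obtain ⟨a, ha, hx⟩ := hx
      have has : a ∈ s := Finset.mem_coe.mp ha
      simp only [dif_pos has] at hx
      obtain ⟨b, hb, rfl⟩ := hx
      refine hgC ?_
      rw [Finset.mem_coe, Finset.mem_biUnion]
      exact ⟨⟨a, has⟩, Finset.mem_attach s _,
        Finset.mem_image.mpr ⟨b, Finset.mem_coe.mp hb, rfl⟩⟩

def mlp (S : Finset (Finset X4)) : Prop :=
  (∀ s ∈ S, s.Nonempty) ∧ (∀ s ∈ S, ∀ t ∈ S, (s ∩ t).Nonempty) ∧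
    ∀ A : Finset X4, (∀ s ∈ S, (A ∩ s).Nonempty) → ∃ s ∈ S, s ⊆ A

instance (S : Finset (Finset X4)) : Decidable (mlp S) :=
  @instDecidableAnd _ _ inferInstance (@instDecidableAnd _ _ inferInstance inferInstance)

lemma good_of_mlp {S : Finset (Finset X4)} (h : mlp S) : good S := by
  refine ⟨?_, h.1⟩
  obtain ⟨s, hs, -⟩ := h.2.2 Finset.univ (fun s hs => by simpa using h.1 s hs)
  exact ⟨s, hs⟩

lemma mlp_maxLinked {S : Finset (Finset X4)} (h : mlp S) :
    (upF S (good_of_mlp h)).IsMaxLinked := by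
  classical
  constructor
  · rintro A ⟨s, hs, hsA⟩ B ⟨t, ht, htB⟩
    obtain ⟨x, hx⟩ := h.2.1 s hs t ht
    rw [Finset.mem_inter] at hx
    exact ⟨x, hsA (Finset.mem_coe.mpr hx.1), htB (Finset.mem_coe.mpr hx.2)⟩
  · intro G hG hsub
    apply Subtype.ext
    refine Set.Subset.antisymm hsub ?_
    intro A hA
    have hfin : A.Finite := Set.toFinite A
    have hmeets : ∀ s ∈ S, (hfin.toFinset ∩ s).Nonempty := by
      intro s hs
      obtain ⟨x, hx1, hx2⟩ := hG A hA ↑s (hsub ⟨s, hs, Set.Subset.rfl⟩)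
      exact ⟨x, Finset.mem_inter.mpr ⟨hfin.mem_toFinset.mpr hx1, Finset.mem_coe.mp hx2⟩⟩
    obtain ⟨s, hs, hsAf⟩ := h.2.2 hfin.toFinset hmeets
    exact ⟨s, hs, fun x hx => hfin.mem_toFinset.mp (hsAf (Finset.mem_coe.mp hx))⟩

lemma compl_mem {F : Upfamily X4} (hF : F.IsMaxLinked) {A : Set X4} (hA : A ∉ F.1) :
    Aᶜ ∈ F.1 := by
  by_contra hAc
  have hmeet : ∀ B ∈ F.1, (A ∩ B).Nonempty := by
    intro B hB
    rcases (A ∩ B).eq_empty_or_nonempty with he | hne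
    · refine absurd (F.2.2.2 B hB Aᶜ fun x hx hxA => ?_) hAc
      have : x ∈ A ∩ B := ⟨hxA, hx⟩
      rw [he] at this
      exact this
    · exact hne
  obtain ⟨B0, hB0⟩ := F.2.1
  have hAne : A.Nonempty := (hmeet B0 hB0).mono Set.inter_subset_left
  have hGup : IsUpfamily (F.1 ∪ {C | A ⊆ C}) := by
    refine ⟨⟨B0, Or.inl hB0⟩, ?_, ?_⟩
    · rintro C (h | h)
      · exact F.2.2.1 C h
      · exact hAne.mono h
    · rintro C (h | h) D hCD
      · exact Or.inl (F.2.2.2 C h D hCD)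
      · exact Or.inr (Set.Subset.trans h hCD)
  set G : Upfamily X4 := ⟨F.1 ∪ {C | A ⊆ C}, hGup⟩ with hGdef
  have hlink : G.Linked := by
    rintro B1 (hB1 | hB1) B2 (hB2 | hB2)
    · exact hF.1 B1 hB1 B2 hB2
    · obtain ⟨x, hxA, hxB⟩ := hmeet B1 hB1
      exact ⟨x, hxB, hB2 hxA⟩
    · obtain ⟨x, hxA, hxB⟩ := hmeet B2 hB2
      exact ⟨x, hB1 hxA, hxB⟩
    · obtain ⟨x, hx⟩ := hAne
      exact ⟨x, hB1 hx, hB2 hx⟩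
  have hFG : F = G := hF.2 G hlink Set.subset_union_left
  refine hA ?_
  rw [hFG]
  exact Or.inr Set.Subset.rfl

lemma mem_or_mem {F : Upfamily X4} (hF : F.IsMaxLinked) (s : Finset X4) :
    (↑s : Set X4) ∈ F.1 ∨ (↑sᶜ : Set X4) ∈ F.1 :=
  or_iff_not_imp_left.mpr fun h => by
    rw [Finset.coe_compl]; exact compl_mem hF h

lemma eq_upF {F : Upfamily X4} (hF : F.IsMaxLinked) {S : Finset (Finset X4)} (hS : mlp S)
    (hmem : ∀ s ∈ S, (↑s : Set X4) ∈ F.1) : F = upF S (good_of_mlp hS) :=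
  ((mlp_maxLinked hS).2 F hF.1 (by rintro A ⟨s, hs, hsub⟩; exact F.2.2.2 _ (hmem s hs) A hsub)).symm

/-- generators of the triangle family avoiding `x` -/
def Dgen (x : ZMod 4) : Finset (Finset X4) :=
  {{el (x+1), el (x+2)}, {el (x+1), el (x+3)}, {el (x+2), el (x+3)}}

/-- generators of the star family at `x` -/
def Lgen (x : ZMod 4) : Finset (Finset X4) :=
  {{el x, el (x+1)}, {el x, el (x+2)}, {el x, el (x+3)}, {el (x+1), el (x+2), el (x+3)}}

instance : Fintype (L 1) := inferInstanceAs (Fintype (Fin 1))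
instance : DecidableEq (L 1) := inferInstanceAs (DecidableEq (Fin 1))

def g : (OSum (Cgrp 2) (L 1)) × Cgrp 4 → Finset (Finset X4)
  | (Sum.inr _, x) => {{x}}
  | (Sum.inl c, x) => if c.toAdd = 0 then Lgen x.toAdd else Dgen x.toAdd

lemma mlp_g : ∀ p, mlp (g p) := by decide

lemma inj_g : ∀ p q, genLE (g p) (g q) ∧ genLE (g q) (g p) → p = q := by decide

def Pg (a : ZMod 4) : Finset (Finset X4) := {{el a}}

lemma mulPP : ∀ a b : ZMod 4, mins (mulGen (Pg a) (Pg b)) = mins (Pg (a+b)) := by decide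
lemma mulPD : ∀ a b : ZMod 4, mins (mulGen (Pg a) (Dgen b)) = mins (Dgen (a+b)) := by decide
lemma mulPL : ∀ a b : ZMod 4, mins (mulGen (Pg a) (Lgen b)) = mins (Lgen (a+b)) := by decide
lemma mulDP : ∀ a b : ZMod 4, mins (mulGen (Dgen a) (Pg b)) = mins (Dgen (a+b)) := by decide
lemma mulDD : ∀ a b : ZMod 4, mins (mulGen (Dgen a) (Dgen b)) = mins (Lgen (a+b)) := by decide
lemma mulDL : ∀ a b : ZMod 4, mins (mulGen (Dgen a) (Lgen b)) = mins (Dgen (a+b)) := by decide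
lemma mulLP : ∀ a b : ZMod 4, mins (mulGen (Lgen a) (Pg b)) = mins (Lgen (a+b)) := by decide
lemma mulLD : ∀ a b : ZMod 4, mins (mulGen (Lgen a) (Dgen b)) = mins (Dgen (a+b)) := by decide
lemma mulLL : ∀ a b : ZMod 4, mins (mulGen (Lgen a) (Lgen b)) = mins (Lgen (a+b)) := by decide

lemma toAdd_cases (c : Cgrp 2) : c.toAdd = 0 ∨ c.toAdd = 1 :=
  (by decide : ∀ u : ZMod 2, u = 0 ∨ u = 1) c.toAdd

lemma g_inr (c : L 1) (x : Cgrp 4) : g (Sum.inr c, x) = Pg x.toAdd := by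
  simp [g, Pg, el]

lemma g_inl0 {c : Cgrp 2} (hc : c.toAdd = 0) (x : Cgrp 4) :
    g (Sum.inl c, x) = Lgen x.toAdd := by simp [g, hc]

lemma g_inl1 {c : Cgrp 2} (hc : c.toAdd = 1) (x : Cgrp 4) :
    g (Sum.inl c, x) = Dgen x.toAdd := by simp [g, hc]

lemma toAdd_mul' (x y : Cgrp 4) : (x * y).toAdd = x.toAdd + y.toAdd := rfl

lemma mul_g (p q : (OSum (Cgrp 2) (L 1)) × Cgrp 4) :
    mins (mulGen (g p) (g q)) = mins (g (p * q)) := by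
  obtain ⟨c, x⟩ := p
  obtain ⟨d, y⟩ := q
  rcases c with c | c <;> rcases d with d | d
  · -- inl inl
    have hmul : ((Sum.inl c, x) * (Sum.inl d, y) : (OSum (Cgrp 2) (L 1)) × Cgrp 4)
        = (Sum.inl (c * d), x * y) := rfl
    rcases toAdd_cases c with hc | hc <;> rcases toAdd_cases d with hd | hd
    · have hcd : (c * d).toAdd = 0 := by
        show c.toAdd + d.toAdd = 0
        rw [hc, hd]; decide
      rw [hmul, g_inl0 hc, g_inl0 hd, g_inl0 hcd, toAdd_mul']
      exact mulLL x.toAdd y.toAdd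
    · have hcd : (c * d).toAdd = 1 := by
        show c.toAdd + d.toAdd = 1
        rw [hc, hd]; decide
      rw [hmul, g_inl0 hc, g_inl1 hd, g_inl1 hcd, toAdd_mul']
      exact mulLD x.toAdd y.toAdd
    · have hcd : (c * d).toAdd = 1 := by
        show c.toAdd + d.toAdd = 1
        rw [hc, hd]; decide
      rw [hmul, g_inl1 hc, g_inl0 hd, g_inl1 hcd, toAdd_mul']
      exact mulDL x.toAdd y.toAdd
    · have hcd : (c * d).toAdd = 0 := by
        show c.toAdd + d.toAdd = 0
        rw [hc, hd]; decide
      rw [hmul, g_inl1 hc, g_inl1 hd, g_inl0 hcd, toAdd_mul']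
      exact mulDD x.toAdd y.toAdd
  · -- inl inr
    have hmul : ((Sum.inl c, x) * (Sum.inr d, y) : (OSum (Cgrp 2) (L 1)) × Cgrp 4)
        = (Sum.inl c, x * y) := rfl
    rcases toAdd_cases c with hc | hc
    · rw [hmul, g_inl0 hc, g_inr, g_inl0 hc, toAdd_mul']
      exact mulLP x.toAdd y.toAdd
    · rw [hmul, g_inl1 hc, g_inr, g_inl1 hc, toAdd_mul']
      exact mulDP x.toAdd y.toAdd
  · -- inr inl
    have hmul : ((Sum.inr c, x) * (Sum.inl d, y) : (OSum (Cgrp 2) (L 1)) × Cgrp 4)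
        = (Sum.inl d, x * y) := rfl
    rcases toAdd_cases d with hd | hd
    · rw [hmul, g_inr, g_inl0 hd, g_inl0 hd, toAdd_mul']
      exact mulPL x.toAdd y.toAdd
    · rw [hmul, g_inr, g_inl1 hd, g_inl1 hd, toAdd_mul']
      exact mulPD x.toAdd y.toAdd
  · -- inr inr
    have hmul : ((Sum.inr c, x) * (Sum.inr d, y) : (OSum (Cgrp 2) (L 1)) × Cgrp 4)
        = (Sum.inr (c * d), x * y) := rfl
    rw [hmul, g_inr, g_inr, g_inr, toAdd_mul']
    exact mulPP x.toAdd y.toAdd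

lemma classify {F : Upfamily X4} (hF : F.IsMaxLinked) :
    ∃ p, upF (g p) (good_of_mlp (mlp_g p)) = F := by
  have c01 : ({el 0, el 1} : Finset X4)ᶜ = {el 2, el 3} := by decide
  have c02 : ({el 0, el 2} : Finset X4)ᶜ = {el 1, el 3} := by decide
  have c03 : ({el 0, el 3} : Finset X4)ᶜ = {el 1, el 2} := by decide
  have c0 : ({el 0} : Finset X4)ᶜ = {el 1, el 2, el 3} := by decide
  have c1 : ({el 1} : Finset X4)ᶜ = {el 0, el 2, el 3} := by decide
  have c2 : ({el 2} : Finset X4)ᶜ = {el 0, el 1, el 3} := by decide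
  have c3 : ({el 3} : Finset X4)ᶜ = {el 0, el 1, el 2} := by decide
  have h1 := mem_or_mem hF {el 0, el 1}
  have h2 := mem_or_mem hF {el 0, el 2}
  have h3 := mem_or_mem hF {el 0, el 3}
  rw [c01] at h1
  rw [c02] at h2
  rw [c03] at h3
  rcases h1 with h1 | h1 <;> rcases h2 with h2 | h2 <;> rcases h3 with h3 | h3
  · -- star at 0
    have h4 := mem_or_mem hF {el 0}
    rw [c0] at h4
    rcases h4 with h4 | h4
    · refine ⟨(Sum.inr ⟨0, Nat.zero_lt_one⟩, el 0), (eq_upF hF (mlp_g _) ?_).symm⟩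
      have e : g (Sum.inr ⟨0, Nat.zero_lt_one⟩, el 0) = {{el 0}} := by decide
      rw [e]; intro s hs
      rw [Finset.mem_singleton] at hs; subst hs; exact h4
    · refine ⟨(Sum.inl (Multiplicative.ofAdd 0), el 0), (eq_upF hF (mlp_g _) ?_).symm⟩
      have e : g (Sum.inl (Multiplicative.ofAdd 0), el 0) =
        {{el 0, el 1}, {el 0, el 2}, {el 0, el 3}, {el 1, el 2, el 3}} := by decide
      rw [e]; intro s hs
      simp only [Finset.mem_insert, Finset.mem_singleton] at hs
      rcases hs with rfl | rfl | rfl | rfl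
      exacts [h1, h2, h3, h4]
  · -- (01, 02, 12): triangle {0,1,2} = Dgen 3
    refine ⟨(Sum.inl (Multiplicative.ofAdd 1), el 3), (eq_upF hF (mlp_g _) ?_).symm⟩
    have e : g (Sum.inl (Multiplicative.ofAdd 1), el 3) =
      {{el 0, el 1}, {el 0, el 2}, {el 1, el 2}} := by decide
    rw [e]; intro s hs
    simp only [Finset.mem_insert, Finset.mem_singleton] at hs
    rcases hs with rfl | rfl | rfl
    exacts [h1, h2, h3]
  · -- (01, 13, 03): triangle {0,1,3} = Dgen 2
    refine ⟨(Sum.inl (Multiplicative.ofAdd 1), el 2), (eq_upF hF (mlp_g _) ?_).symm⟩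
    have e : g (Sum.inl (Multiplicative.ofAdd 1), el 2) =
      {{el 0, el 1}, {el 1, el 3}, {el 0, el 3}} := by decide
    rw [e]; intro s hs
    simp only [Finset.mem_insert, Finset.mem_singleton] at hs
    rcases hs with rfl | rfl | rfl
    exacts [h1, h2, h3]
  · -- (01, 13, 12): star at 1
    have h4 := mem_or_mem hF {el 1}
    rw [c1] at h4
    rcases h4 with h4 | h4
    · refine ⟨(Sum.inr ⟨0, Nat.zero_lt_one⟩, el 1), (eq_upF hF (mlp_g _) ?_).symm⟩
      have e : g (Sum.inr ⟨0, Nat.zero_lt_one⟩, el 1) = {{el 1}} := by decide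
      rw [e]; intro s hs
      rw [Finset.mem_singleton] at hs; subst hs; exact h4
    · refine ⟨(Sum.inl (Multiplicative.ofAdd 0), el 1), (eq_upF hF (mlp_g _) ?_).symm⟩
      have e : g (Sum.inl (Multiplicative.ofAdd 0), el 1) =
        {{el 0, el 1}, {el 1, el 3}, {el 1, el 2}, {el 0, el 2, el 3}} := by decide
      rw [e]; intro s hs
      simp only [Finset.mem_insert, Finset.mem_singleton] at hs
      rcases hs with rfl | rfl | rfl | rfl
      exacts [h1, h2, h3, h4]
  · -- (23, 02, 03): triangle {0,2,3} = Dgen 1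
    refine ⟨(Sum.inl (Multiplicative.ofAdd 1), el 1), (eq_upF hF (mlp_g _) ?_).symm⟩
    have e : g (Sum.inl (Multiplicative.ofAdd 1), el 1) =
      {{el 2, el 3}, {el 0, el 2}, {el 0, el 3}} := by decide
    rw [e]; intro s hs
    simp only [Finset.mem_insert, Finset.mem_singleton] at hs
    rcases hs with rfl | rfl | rfl
    exacts [h1, h2, h3]
  · -- (23, 02, 12): star at 2
    have h4 := mem_or_mem hF {el 2}
    rw [c2] at h4
    rcases h4 with h4 | h4
    · refine ⟨(Sum.inr ⟨0, Nat.zero_lt_one⟩, el 2), (eq_upF hF (mlp_g _) ?_).symm⟩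
      have e : g (Sum.inr ⟨0, Nat.zero_lt_one⟩, el 2) = {{el 2}} := by decide
      rw [e]; intro s hs
      rw [Finset.mem_singleton] at hs; subst hs; exact h4
    · refine ⟨(Sum.inl (Multiplicative.ofAdd 0), el 2), (eq_upF hF (mlp_g _) ?_).symm⟩
      have e : g (Sum.inl (Multiplicative.ofAdd 0), el 2) =
        {{el 2, el 3}, {el 0, el 2}, {el 1, el 2}, {el 0, el 1, el 3}} := by decide
      rw [e]; intro s hs
      simp only [Finset.mem_insert, Finset.mem_singleton] at hs
      rcases hs with rfl | rfl | rfl | rfl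
      exacts [h1, h2, h3, h4]
  · -- (23, 13, 03): star at 3
    have h4 := mem_or_mem hF {el 3}
    rw [c3] at h4
    rcases h4 with h4 | h4
    · refine ⟨(Sum.inr ⟨0, Nat.zero_lt_one⟩, el 3), (eq_upF hF (mlp_g _) ?_).symm⟩
      have e : g (Sum.inr ⟨0, Nat.zero_lt_one⟩, el 3) = {{el 3}} := by decide
      rw [e]; intro s hs
      rw [Finset.mem_singleton] at hs; subst hs; exact h4
    · refine ⟨(Sum.inl (Multiplicative.ofAdd 0), el 3), (eq_upF hF (mlp_g _) ?_).symm⟩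
      have e : g (Sum.inl (Multiplicative.ofAdd 0), el 3) =
        {{el 2, el 3}, {el 1, el 3}, {el 0, el 3}, {el 0, el 1, el 2}} := by decide
      rw [e]; intro s hs
      simp only [Finset.mem_insert, Finset.mem_singleton] at hs
      rcases hs with rfl | rfl | rfl | rfl
      exacts [h1, h2, h3, h4]
  · -- (23, 13, 12): triangle {1,2,3} = Dgen 0
    refine ⟨(Sum.inl (Multiplicative.ofAdd 1), el 0), (eq_upF hF (mlp_g _) ?_).symm⟩
    have e : g (Sum.inl (Multiplicative.ofAdd 1), el 0) =
      {{el 2, el 3}, {el 1, el 3}, {el 1, el 2}} := by decide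
    rw [e]; intro s hs
    simp only [Finset.mem_insert, Finset.mem_singleton] at hs
    rcases hs with rfl | rfl | rfl
    exacts [h1, h2, h3]

end C4Proof

/-- Proposition 4.1(3): `λ(C₄) ≅ (C₂ ⊔ L₁) × C₄`. -/
theorem superextension_C4 :
    MulIsoOnto ((OSum (Cgrp 2) (L 1)) × Cgrp 4) (lambdaS (Cgrp 4))  := by
  classical
  refine ⟨fun p => upF (g p) (good_of_mlp (mlp_g p)), ?_, ?_, ?_⟩
  · intro p q hpq
    have hval : up (g p) = up (g q) := congrArg Subtype.val hpq
    exact inj_g p q ⟨(up_subset _ _).mp hval.le, (up_subset _ _).mp hval.ge⟩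
  · apply Set.ext
    intro F
    constructor
    · rintro ⟨p, rfl⟩
      exact mlp_g p |> mlp_maxLinked
    · intro hF
      exact classify hF
  · intro p q
    apply Subtype.ext
    show up (g (p * q)) = upMul (up (g p)) (up (g q))
    rw [upMul_up (good_of_mlp (mlp_g q)).1, up_mins (mulGen (g p) (g q)), mul_g p q,
      ← up_mins]
end
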